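/- arXiv:1306.1641 — 9 statements merged into one kernel-verified Lean document; each statement's English description precedes it below -/
import Mathlib

section
/- (Proposition 2.5) For every normalized divisive weight vector χ, the maps g_0, g_1, …, g_n are characteristic maps of a finite CW-structure on ℙ(χ) containing exactly n+1 cells, one of each even dimension 0, 2, …, 2n: for 1 ≤ i ≤ n the restriction of g_i to the open disc {w ∈ ℂ^i : |w| < 1} is a homeomorphism onto the open cell {[z] ∈ ℙ(χ) : z_0 = ⋯ = z_{n−i−1} = 0, z_{n−i} ≠ 0}, g_i maps the boundary sphere {w : |w| = 1} into the union {[z] : z_0 = ⋯ = z_{n−i} = 0} of all lower-dimensional cells, and the zero cell is {[0,…,0,1]}. -/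
noncomputable section

open Complex

/-- The unit sphere `S^{2n+1} ⊆ ℂ^{n+1}`. -/
abbrev Sph (n : ℕ) := {z : Fin (n + 1) → ℂ // ∑ j, Complex.normSq (z j) = 1}

/-- The relation identifying points of `S^{2n+1}` in the same orbit of the weighted
circle `T(χ) = {(t^{χ₀},…,t^{χₙ}) : |t| = 1}`, acting coordinatewise. -/
def WPrel (n : ℕ) (χ : Fin (n + 1) → ℕ) (z z' : Sph n) : Prop :=
  ∃ t : ℂ, ‖t‖ = 1 ∧ ∀ j, z'.1 j = t ^ (χ j) * z.1 j

/-- The weighted projective space `ℙ(χ) = S^{2n+1}/T(χ)` with the quotient topology. -/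
abbrev WPS (n : ℕ) (χ : Fin (n + 1) → ℕ) := Quot (WPrel n χ)

/-- The vector `(0,…,0,√(1−|w|²),w₁,…,wᵢ) ∈ ℂ^{n+1}` (the square root in coordinate
`n − i`). -/
def zvec (n i : ℕ) (hi : i ≤ n) (w : Fin i → ℂ) : Fin (n + 1) → ℂ := fun j =>
  Fin.append
    (Fin.append (fun _ : Fin (n - i) => (0 : ℂ))
      (fun _ : Fin 1 => ((Real.sqrt (1 - ∑ k, Complex.normSq (w k)) : ℝ) : ℂ)))
    w (Fin.cast (by omega) j)

lemma zvec_mem (n i : ℕ) (hi : i ≤ n) (w : Fin i → ℂ)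
    (hw : ∑ k, Complex.normSq (w k) ≤ 1) :
    ∑ j, Complex.normSq (zvec n i hi w j) = 1 := by
  classical
  set c : ℂ := ((Real.sqrt (1 - ∑ k, Complex.normSq (w k)) : ℝ) : ℂ) with hc
  set F : Fin (n - i + 1 + i) → ℂ :=
    Fin.append (Fin.append (fun _ : Fin (n - i) => (0 : ℂ)) (fun _ : Fin 1 => c)) w with hF
  have key : ∑ j : Fin (n + 1), Complex.normSq (zvec n i hi w j)
      = ∑ j : Fin (n - i + 1 + i), Complex.normSq (F j) :=
    Fintype.sum_equiv (finCongr (by omega)) _ _ (fun j => rfl)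
  rw [key, Fin.sum_univ_add]
  have h1 : ∑ j : Fin (n - i + 1), Complex.normSq (F (Fin.castAdd i j))
      = 1 - ∑ k, Complex.normSq (w k) := by
    have : ∀ j : Fin (n - i + 1), F (Fin.castAdd i j)
        = Fin.append (fun _ : Fin (n - i) => (0 : ℂ)) (fun _ : Fin 1 => c) j := fun j => by
      rw [hF, Fin.append_left]
    simp only [this]
    rw [Fin.sum_univ_add]
    simp only [Fin.append_left, Fin.append_right]
    have h0 : 0 ≤ 1 - ∑ k, Complex.normSq (w k) := by linarith
    simp [hc, Complex.normSq_ofReal, Real.mul_self_sqrt h0]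
  have h2 : ∀ j : Fin i, F (Fin.natAdd (n - i + 1) j) = w j := fun j => by
    rw [hF, Fin.append_right]
  simp only [h2]
  rw [h1]
  ring

/-- The characteristic map `gᵢ : D^{2i} → ℙ(χ)`,
`gᵢ(w) = [0,…,0,√(1−|w|²),w₁,…,wᵢ]`, defined on the closed unit disc. -/
def gmap (n : ℕ) (χ : Fin (n + 1) → ℕ) (i : ℕ) (hi : i ≤ n)
    (w : {w : Fin i → ℂ // ∑ k, Complex.normSq (w k) ≤ 1}) : WPS n χ :=
  Quot.mk _ ⟨zvec n i hi w.1, zvec_mem n i hi w.1 w.2⟩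

/-- The open `2i`-cell `{[z] ∈ ℙ(χ) : z₀ = ⋯ = z_{n−i−1} = 0, z_{n−i} ≠ 0}`. -/
def cell (n : ℕ) (χ : Fin (n + 1) → ℕ) (i : ℕ) : Set (WPS n χ) :=
  {p | ∃ z : Sph n, (∀ j : Fin (n + 1), (j : ℕ) + i < n → z.1 j = 0) ∧
    z.1 ⟨n - i, Nat.lt_succ_of_le (Nat.sub_le n i)⟩ ≠ 0 ∧ p = Quot.mk _ z}

/-- The point `(0,…,0,1) ∈ S^{2n+1}`. -/
def eN (n : ℕ) : Sph n :=
  ⟨fun j => if (j : ℕ) = n then 1 else 0, by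
    have h : ∀ j : Fin (n + 1),
        Complex.normSq (if (j : ℕ) = n then (1 : ℂ) else 0)
          = if j = Fin.last n then 1 else 0 := by
      intro j
      by_cases h : (j : ℕ) = n
      · have : j = Fin.last n := by ext; simpa using h
        simp [h, this]
      · have : j ≠ Fin.last n := fun hj => h (by simp [hj])
        simp [h, this]
    rw [Finset.sum_congr rfl (fun j _ => h j)]
    simp⟩


section Helpers

lemma zvec_of_lt (n i : ℕ) (hi : i ≤ n) (w : Fin i → ℂ) (j : Fin (n+1)) (h : (j:ℕ) < n - i) :
    zvec n i hi w j = 0 := by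
  unfold zvec
  have h1 : Fin.cast (by omega : n + 1 = n - i + 1 + i) j
      = Fin.castAdd i (Fin.castAdd 1 ⟨(j:ℕ), h⟩ : Fin (n - i + 1)) := by
    apply Fin.ext; simp
  rw [h1, Fin.append_left, Fin.append_left]

lemma zvec_of_eq (n i : ℕ) (hi : i ≤ n) (w : Fin i → ℂ) (j : Fin (n+1)) (h : (j:ℕ) = n - i) :
    zvec n i hi w j = ((Real.sqrt (1 - ∑ k, Complex.normSq (w k)) : ℝ) : ℂ) := by
  unfold zvec
  have h1 : Fin.cast (by omega : n + 1 = n - i + 1 + i) j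
      = Fin.castAdd i (Fin.natAdd (n-i) (0 : Fin 1)) := by
    apply Fin.ext; simp [h]
  rw [h1, Fin.append_left, Fin.append_right]

lemma zvec_of_gt (n i : ℕ) (hi : i ≤ n) (w : Fin i → ℂ) (j : Fin (n+1)) (k : Fin i)
    (h : (j:ℕ) = n - i + 1 + k) : zvec n i hi w j = w k := by
  unfold zvec
  have h1 : Fin.cast (by omega : n + 1 = n - i + 1 + i) j = Fin.natAdd (n-i+1) k := by
    apply Fin.ext; simp [h]
  rw [h1, Fin.append_right]

lemma sum_split (n i : ℕ) (hi : i ≤ n) (f : Fin (n + 1) → ℝ) :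
    ∑ j, f j = (∑ j : Fin (n - i), f ⟨j, by omega⟩) + f ⟨n - i, by omega⟩
      + ∑ k : Fin i, f ⟨n - i + 1 + k, by omega⟩ := by
  have key := Fintype.sum_equiv (finCongr (by omega : n - i + 1 + i = n + 1))
    (fun x => f (finCongr (by omega) x)) f (fun _ => rfl)
  rw [← key, Fin.sum_univ_add, Fin.sum_univ_castSucc]
  rfl

lemma wprel_equiv (n : ℕ) (χ : Fin (n + 1) → ℕ) : Equivalence (WPrel n χ) := by
  constructor
  · intro z; exact ⟨1, by simp, fun j => by simp⟩
  · rintro z z' ⟨t, ht, h⟩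
    have ht0 : t ≠ 0 := fun h0 => by simp [h0] at ht
    refine ⟨t⁻¹, by simp [ht], fun j => ?_⟩
    rw [h j, inv_pow, inv_mul_cancel_left₀ (pow_ne_zero _ ht0)]
  · rintro z z' z'' ⟨t, ht, h⟩ ⟨s, hs, h'⟩
    refine ⟨s * t, by simp [ht, hs], fun j => ?_⟩
    rw [h' j, h j, mul_pow]; ring

lemma quot_mk_eq_iff (n : ℕ) (χ : Fin (n + 1) → ℕ) (z z' : Sph n) :
    Quot.mk (WPrel n χ) z = Quot.mk (WPrel n χ) z' ↔ WPrel n χ z z' := by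
  rw [Quot.eq, Equivalence.eqvGen_iff (wprel_equiv n χ)]

lemma real_pow_eq_one {x : ℝ} (hx : 0 ≤ x) {k : ℕ} (hk : k ≠ 0) (h : x ^ k = 1) : x = 1 := by
  rcases lt_trichotomy x 1 with h1 | h1 | h1
  · have := pow_lt_one₀ hx h1 hk; linarith
  · exact h1
  · have := one_lt_pow₀ h1 hk; linarith

lemma abs_of_pow_eq {t u : ℂ} {k : ℕ} (hk : k ≠ 0) (h : t ^ k = u)
    (hu : ‖u‖ = 1) : ‖t‖ = 1 := by
  apply real_pow_eq_one (norm_nonneg t) hk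
  rw [← norm_pow, h, hu]

lemma chi_dvd_of_le (n : ℕ) (χ : Fin (n + 1) → ℕ)
    (hdiv : ∀ j : Fin n, χ j.castSucc ∣ χ j.succ) (a b : Fin (n + 1)) (hab : (a : ℕ) ≤ b) :
    χ a ∣ χ b := by
  obtain ⟨s, hs⟩ := Nat.exists_eq_add_of_le hab
  have key : ∀ s : ℕ, ∀ _ : (a : ℕ) + s ≤ n, χ a ∣ χ ⟨(a : ℕ) + s, by omega⟩ := by
    intro s
    induction s with
    | zero => intro h; have : (⟨(a:ℕ)+0, by omega⟩ : Fin (n+1)) = a := by apply Fin.ext; simp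
              rw [this]
    | succ s ih =>
      intro h
      have h2 := hdiv ⟨(a:ℕ) + s, by omega⟩
      have e1 : (⟨(a:ℕ)+s, by omega⟩ : Fin n).castSucc = ⟨(a:ℕ)+s, by omega⟩ := by
        apply Fin.ext; simp
      have e2 : (⟨(a:ℕ)+s, by omega⟩ : Fin n).succ = ⟨(a:ℕ)+s+1, by omega⟩ := by
        apply Fin.ext; simp
      rw [e1, e2] at h2
      exact dvd_trans (ih (by omega)) h2
  have hb : b = ⟨(a:ℕ) + s, by omega⟩ := by apply Fin.ext; simp [hs]
  rw [hb]; exact key s (by omega)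

def mIdx (n i : ℕ) (hi : i ≤ n) : Fin (n + 1) := ⟨n - i, by omega⟩
def kIdx (n i : ℕ) (hi : i ≤ n) (k : Fin i) : Fin (n + 1) := ⟨n - i + 1 + k, by omega⟩

/-- The inverse map: `k ↦ (conj a/|a|)^(χ_{jk}/χ_m) ⬝ z_{jk}` where `a = z_{n-i}`. -/
def Ftil (n : ℕ) (χ : Fin (n + 1) → ℕ) (i : ℕ) (hi : i ≤ n) (z : Sph n) : Fin i → ℂ :=
  fun k =>
    ((starRingEnd ℂ) (z.1 (mIdx n i hi)) / ((‖z.1 (mIdx n i hi)‖ : ℝ) : ℂ))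
      ^ (χ (kIdx n i hi k) / χ (mIdx n i hi)) * z.1 (kIdx n i hi k)

lemma conj_div_abs_mul {t : ℂ} (ht : ‖t‖ = 1) (c : ℕ) (a : ℂ) :
    (starRingEnd ℂ) (t ^ c * a) / ((‖t ^ c * a‖ : ℝ) : ℂ)
      = (t⁻¹) ^ c * ((starRingEnd ℂ) a / ((‖a‖ : ℝ) : ℂ)) := by
  have hct : (starRingEnd ℂ) t = t⁻¹ := by
    have h1 : t * (starRingEnd ℂ) t = 1 := by
      rw [Complex.mul_conj]; norm_cast; rw [← Complex.sq_norm, ht]; norm_num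
    exact eq_inv_of_mul_eq_one_right h1
  rw [map_mul, map_pow, hct, norm_mul, norm_pow, ht, one_pow, one_mul]
  rw [mul_div_assoc]

lemma Ftil_invariant (n : ℕ) (χ : Fin (n + 1) → ℕ) (i : ℕ) (hi : i ≤ n)
    (hdiv : ∀ j : Fin (n + 1), (mIdx n i hi : ℕ) ≤ j → χ (mIdx n i hi) ∣ χ j)
    (z z' : Sph n) (h : WPrel n χ z z') : Ftil n χ i hi z = Ftil n χ i hi z' := by
  obtain ⟨t, ht, hz⟩ := h
  have ht0 : t ≠ 0 := fun h0 => by simp [h0] at ht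
  funext k
  have hdvd : χ (mIdx n i hi) ∣ χ (kIdx n i hi k) := hdiv _ (by simp [mIdx, kIdx]; omega)
  have hcd : χ (mIdx n i hi) * (χ (kIdx n i hi k) / χ (mIdx n i hi)) = χ (kIdx n i hi k) :=
    Nat.mul_div_cancel' hdvd
  have htk : t ^ χ (kIdx n i hi k) ≠ 0 := pow_ne_zero _ ht0
  unfold Ftil
  rw [hz (kIdx n i hi k), hz (mIdx n i hi), conj_div_abs_mul ht, mul_pow, ← pow_mul, hcd,
    inv_pow]
  linear_combination (-(((starRingEnd ℂ) (z.1 (mIdx n i hi)) /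
      ((‖z.1 (mIdx n i hi)‖ : ℝ) : ℂ)) ^ (χ (kIdx n i hi k) / χ (mIdx n i hi)) *
      z.1 (kIdx n i hi k))) * inv_mul_cancel₀ htk

/-- (A): `Ftil` is a left inverse of the disc parametrization. -/
lemma Ftil_zvec (n : ℕ) (χ : Fin (n + 1) → ℕ) (i : ℕ) (hi : i ≤ n) (w : Fin i → ℂ)
    (hw : ∑ k, Complex.normSq (w k) < 1) (hmem : ∑ j, Complex.normSq (zvec n i hi w j) = 1) :
    Ftil n χ i hi ⟨zvec n i hi w, hmem⟩ = w := by
  have hs : 0 < Real.sqrt (1 - ∑ k, Complex.normSq (w k)) := Real.sqrt_pos.mpr (by linarith)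
  funext k
  unfold Ftil
  rw [show ((⟨zvec n i hi w, hmem⟩ : Sph n).1) = zvec n i hi w from rfl]
  rw [zvec_of_eq n i hi w (mIdx n i hi) rfl, zvec_of_gt n i hi w (kIdx n i hi k) k rfl,
    Complex.conj_ofReal, Complex.norm_real, Real.norm_eq_abs, _root_.abs_of_pos hs,
    div_self (by exact_mod_cast hs.ne'), one_pow, one_mul]

/-- (B): the norm computation of `Ftil` on the cell. -/
lemma Ftil_sum (n : ℕ) (χ : Fin (n + 1) → ℕ) (i : ℕ) (hi : i ≤ n) (z : Sph n)
    (hz0 : ∀ j : Fin (n + 1), (j : ℕ) + i < n → z.1 j = 0)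
    (ha : z.1 (mIdx n i hi) ≠ 0) :
    ∑ k, Complex.normSq (Ftil n χ i hi z k) = 1 - Complex.normSq (z.1 (mIdx n i hi)) := by
  have hu : Complex.normSq ((starRingEnd ℂ) (z.1 (mIdx n i hi)) /
      ((‖z.1 (mIdx n i hi)‖ : ℝ) : ℂ)) = 1 := by
    rw [map_div₀ Complex.normSq, Complex.normSq_conj, Complex.normSq_ofReal,
      ← sq, ← Complex.normSq_eq_norm_sq, div_self (Complex.normSq_pos.mpr ha).ne']
  have hterm : ∀ k, Complex.normSq (Ftil n χ i hi z k)
      = Complex.normSq (z.1 (kIdx n i hi k)) := by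
    intro k
    unfold Ftil
    rw [map_mul Complex.normSq, map_pow Complex.normSq, hu, one_pow, one_mul]
  have hsp := sum_split n i hi (fun j => Complex.normSq (z.1 j))
  rw [z.2] at hsp
  have h0 : (∑ j : Fin (n - i), Complex.normSq (z.1 ⟨j, by omega⟩)) = 0 := by
    apply Finset.sum_eq_zero; intro j _
    rw [hz0 ⟨j, by omega⟩ (by simp; omega)]; simp
  rw [h0] at hsp
  have e1 : ∀ k : Fin i, (⟨n - i + 1 + (k : ℕ), by omega⟩ : Fin (n+1)) = kIdx n i hi k :=
    fun k => rfl
  simp only [e1] at hsp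
  simp only [hterm]
  have e2 : (⟨n - i, by omega⟩ : Fin (n+1)) = mIdx n i hi := rfl
  rw [e2] at hsp
  linarith

/-- (C): the disc parametrization is a right inverse to `Ftil` on the cell. -/
lemma gmap_Ftil (n : ℕ) (χ : Fin (n + 1) → ℕ) (i : ℕ) (hi : i ≤ n)
    (hpos : ∀ j, 0 < χ j)
    (hdiv : ∀ j : Fin (n + 1), (mIdx n i hi : ℕ) ≤ j → χ (mIdx n i hi) ∣ χ j)
    (z : Sph n)
    (hz0 : ∀ j : Fin (n + 1), (j : ℕ) + i < n → z.1 j = 0)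
    (ha : z.1 (mIdx n i hi) ≠ 0)
    (h2 : ∑ k, Complex.normSq (Ftil n χ i hi z k) ≤ 1) :
    gmap n χ i hi ⟨Ftil n χ i hi z, h2⟩ = Quot.mk (WPrel n χ) z := by
  set a := z.1 (mIdx n i hi) with hadef
  set u : ℂ := (starRingEnd ℂ) a / ((‖a‖ : ℝ) : ℂ) with hudef
  have ha' : ((‖a‖ : ℝ) : ℂ) ≠ 0 := by
    exact_mod_cast (norm_pos_iff.mpr ha).ne'
  have hu1 : ‖u‖ = 1 := by
    rw [hudef, norm_div, Complex.norm_conj, Complex.norm_real, Real.norm_eq_abs,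
      _root_.abs_of_nonneg (norm_nonneg a), div_self (norm_pos_iff.mpr ha).ne']
  obtain ⟨t, htu⟩ := IsAlgClosed.exists_pow_nat_eq u (hpos (mIdx n i hi))
  have ht : ‖t‖ = 1 := abs_of_pow_eq (hpos (mIdx n i hi)).ne' htu hu1
  have hsum := Ftil_sum n χ i hi z hz0 ha
  have coords : ∀ j, (zvec n i hi (Ftil n χ i hi z)) j = t ^ χ j * z.1 j := by
    intro j
    rcases lt_trichotomy (j : ℕ) (n - i) with hj | hj | hj
    · rw [zvec_of_lt n i hi _ j hj, hz0 j (by omega), mul_zero]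
    · have hjm : j = mIdx n i hi := Fin.ext hj
      rw [zvec_of_eq n i hi _ j hj, hsum, hjm, ← hadef, htu, hudef]
      have e3 : (1 : ℝ) - (1 - Complex.normSq a) = Complex.normSq a := by ring
      rw [e3, ← Complex.norm_def]
      rw [div_mul_eq_mul_div, mul_comm, Complex.mul_conj]
      rw [Complex.normSq_eq_norm_sq, sq]
      push_cast
      rw [mul_div_assoc, div_self ha', mul_one]
    · have hk : (j : ℕ) - (n - i + 1) < i := by omega
      set kf : Fin i := ⟨(j : ℕ) - (n - i + 1), hk⟩ with hkf
      have hjk : j = kIdx n i hi kf := Fin.ext (by simp [kIdx, hkf]; omega)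
      have hdvd : χ (mIdx n i hi) ∣ χ (kIdx n i hi kf) := hdiv _ (by simp [mIdx, kIdx]; omega)
      rw [zvec_of_gt n i hi _ j kf (by simp [hkf]; omega), hjk]
      show u ^ (χ (kIdx n i hi kf) / χ (mIdx n i hi)) * z.1 (kIdx n i hi kf) = _
      rw [← htu, ← pow_mul, Nat.mul_div_cancel' hdvd]
  exact ((quot_mk_eq_iff n χ z ⟨zvec n i hi (Ftil n χ i hi z),
    zvec_mem n i hi _ h2⟩).mpr ⟨t, ht, coords⟩).symm

lemma gmap_continuous (n : ℕ) (χ : Fin (n + 1) → ℕ) (i : ℕ) (hi : i ≤ n) :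
    Continuous (gmap n χ i hi) := by
  show Continuous fun w : {w : Fin i → ℂ // ∑ k, Complex.normSq (w k) ≤ 1} =>
    Quot.mk (WPrel n χ) ⟨zvec n i hi w.1, zvec_mem n i hi w.1 w.2⟩
  refine continuous_quot_mk.comp (Continuous.subtype_mk ?_ _)
  apply continuous_pi
  intro j
  rcases lt_trichotomy (j : ℕ) (n - i) with hj | hj | hj
  · have e : (fun w : {w : Fin i → ℂ // ∑ k, Complex.normSq (w k) ≤ 1} =>
        zvec n i hi w.1 j) = fun _ => 0 := funext fun w => zvec_of_lt n i hi w.1 j hj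
    rw [e]; exact continuous_const
  · have e : (fun w : {w : Fin i → ℂ // ∑ k, Complex.normSq (w k) ≤ 1} =>
        zvec n i hi w.1 j) = fun w => ((Real.sqrt (1 - ∑ k, Complex.normSq (w.1 k)) : ℝ) : ℂ) :=
      funext fun w => zvec_of_eq n i hi w.1 j hj
    rw [e]
    apply Complex.continuous_ofReal.comp
    apply Real.continuous_sqrt.comp
    apply continuous_const.sub
    apply continuous_finset_sum
    intro k _
    exact Complex.continuous_normSq.comp ((continuous_apply k).comp continuous_subtype_val)
  · have hk : (j : ℕ) - (n - i + 1) < i := by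
      have := j.2; omega
    have e : (fun w : {w : Fin i → ℂ // ∑ k, Complex.normSq (w k) ≤ 1} =>
        zvec n i hi w.1 j) = fun w => w.1 ⟨(j : ℕ) - (n - i + 1), hk⟩ :=
      funext fun w => zvec_of_gt n i hi w.1 j ⟨(j : ℕ) - (n - i + 1), hk⟩ (by simp; omega)
    rw [e]
    exact (continuous_apply _).comp continuous_subtype_val

def Fbar (n : ℕ) (χ : Fin (n + 1) → ℕ) (i : ℕ) (hi : i ≤ n)
    (hdiv : ∀ j : Fin (n + 1), (mIdx n i hi : ℕ) ≤ j → χ (mIdx n i hi) ∣ χ j) :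
    WPS n χ → (Fin i → ℂ) :=
  Quot.lift (Ftil n χ i hi) (fun z z' h => Ftil_invariant n χ i hi hdiv z z' h)

def Ucell (n : ℕ) (χ : Fin (n + 1) → ℕ) (i : ℕ) (hi : i ≤ n) : Set (WPS n χ) :=
  {p | ∃ z : Sph n, z.1 (mIdx n i hi) ≠ 0 ∧ p = Quot.mk _ z}

lemma preimage_Ucell (n : ℕ) (χ : Fin (n + 1) → ℕ) (i : ℕ) (hi : i ≤ n) :
    Quot.mk (WPrel n χ) ⁻¹' (Ucell n χ i hi) = {z : Sph n | z.1 (mIdx n i hi) ≠ 0} := by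
  ext z
  constructor
  · rintro ⟨z', hz', he⟩
    obtain ⟨t, ht, h⟩ := (quot_mk_eq_iff n χ z z').mp he
    have ht0 : t ≠ 0 := fun h0 => by simp [h0] at ht
    intro h0
    rw [h (mIdx n i hi), h0, mul_zero] at hz'
    exact hz' rfl
  · intro hz
    exact ⟨z, hz, rfl⟩

lemma isOpen_sph_ne (n : ℕ) (j : Fin (n + 1)) : IsOpen {z : Sph n | z.1 j ≠ 0} := by
  have hc : Continuous fun z : Sph n => z.1 j := (continuous_apply _).comp continuous_subtype_val
  exact isOpen_ne.preimage hc

lemma continuousOn_Ftil (n : ℕ) (χ : Fin (n + 1) → ℕ) (i : ℕ) (hi : i ≤ n) :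
    ContinuousOn (Ftil n χ i hi) {z : Sph n | z.1 (mIdx n i hi) ≠ 0} := by
  rw [continuousOn_pi]
  intro k
  unfold Ftil
  apply ContinuousOn.mul
  · apply ContinuousOn.pow
    apply ContinuousOn.div
    · exact (Complex.continuous_conj.comp
        ((continuous_apply _).comp continuous_subtype_val)).continuousOn
    · exact (Complex.continuous_ofReal.comp (continuous_norm.comp
        ((continuous_apply _).comp continuous_subtype_val))).continuousOn
    · intro z hz
      exact_mod_cast (norm_pos_iff.mpr hz).ne'
  · exact ((continuous_apply _).comp continuous_subtype_val).continuousOn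

lemma continuousOn_Fbar (n : ℕ) (χ : Fin (n + 1) → ℕ) (i : ℕ) (hi : i ≤ n)
    (hdiv : ∀ j : Fin (n + 1), (mIdx n i hi : ℕ) ≤ j → χ (mIdx n i hi) ∣ χ j) :
    ContinuousOn (Fbar n χ i hi hdiv) (Ucell n χ i hi) := by
  rw [continuousOn_iff']
  intro W hW
  refine ⟨Fbar n χ i hi hdiv ⁻¹' W ∩ Ucell n χ i hi, ?_, by
    rw [Set.inter_assoc, Set.inter_self]⟩
  rw [← (isQuotientMap_quot_mk (r := WPrel n χ)).isOpen_preimage]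
  have he : Quot.mk (WPrel n χ) ⁻¹' (Fbar n χ i hi hdiv ⁻¹' W ∩ Ucell n χ i hi)
      = {z : Sph n | z.1 (mIdx n i hi) ≠ 0} ∩ Ftil n χ i hi ⁻¹' W := by
    rw [Set.preimage_inter, preimage_Ucell, Set.inter_comm]
    rfl
  rw [he]
  exact ContinuousOn.isOpen_inter_preimage (continuousOn_Ftil n χ i hi)
    (isOpen_sph_ne n _) hW

lemma min_nonzero (n : ℕ) (z : Sph n) :
    ∃ m : Fin (n + 1), z.1 m ≠ 0 ∧ ∀ j : Fin (n + 1), (j : ℕ) < (m : ℕ) → z.1 j = 0 := by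
  classical
  have hex : ∃ j, z.1 j ≠ 0 := by
    by_contra h
    push_neg at h
    have h2 := z.2
    simp only [h, Complex.normSq_zero, Finset.sum_const_zero] at h2
    exact zero_ne_one h2
  set S := Finset.univ.filter (fun j => z.1 j ≠ 0) with hS
  have hSne : S.Nonempty := by
    obtain ⟨j, hj⟩ := hex
    exact ⟨j, by simp [hS, hj]⟩
  refine ⟨S.min' hSne, ?_, ?_⟩
  · have := S.min'_mem hSne
    simp [hS] at this
    exact this
  · intro j hj
    by_contra h0
    have hjS : j ∈ S := by simp [hS, h0]
    have := S.min'_le j hjS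
    rw [Fin.le_def] at this
    omega

end Helpers

/-- **Proposition 2.5.** For every normalized divisive weight vector `χ`, the maps
`g₀, g₁, …, gₙ` are characteristic maps of a CW-structure on `ℙ(χ)` with exactly `n+1`
cells, one of each even dimension `0, 2, …, 2n`:
* each `gᵢ` is continuous;
* for `1 ≤ i ≤ n` the restriction of `gᵢ` to the open disc `{w : |w| < 1}` is a
  homeomorphism onto the open cell `{[z] : z₀ = ⋯ = z_{n−i−1} = 0, z_{n−i} ≠ 0}`;
* for `1 ≤ i ≤ n`, `gᵢ` maps the boundary sphere `{w : |w| = 1}` into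
  `{[z] : z₀ = ⋯ = z_{n−i} = 0}`, which is the union of all lower-dimensional cells;
* the zero cell is `{[0,…,0,1]}`;
* the cells cover `ℙ(χ)` and are pairwise disjoint. -/
theorem wps_cw_structure (n : ℕ) (χ : Fin (n + 1) → ℕ) (hpos : ∀ j, 0 < χ j)
    (hdiv : ∀ j : Fin n, χ j.castSucc ∣ χ j.succ)
    (hnorm : ∀ j : Fin (n + 1), Finset.gcd (Finset.univ.erase j) χ = 1) :
    (∀ i (hi : i ≤ n), Continuous (gmap n χ i hi)) ∧
    (∀ i (hi1 : 1 ≤ i) (hi : i ≤ n),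
      ∃ e : {w : Fin i → ℂ // ∑ k, Complex.normSq (w k) < 1} ≃ₜ cell n χ i,
        ∀ w : {w : Fin i → ℂ // ∑ k, Complex.normSq (w k) < 1},
          (e w : WPS n χ) = gmap n χ i hi ⟨w.1, le_of_lt w.2⟩) ∧
    (∀ i (hi1 : 1 ≤ i) (hi : i ≤ n) (w : Fin i → ℂ)
        (hw : ∑ k, Complex.normSq (w k) = 1),
      ∃ z : Sph n, (∀ j : Fin (n + 1), (j : ℕ) + i ≤ n → z.1 j = 0) ∧
        gmap n χ i hi ⟨w, le_of_eq hw⟩ = Quot.mk _ z) ∧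
    (∀ i, 1 ≤ i → i ≤ n →
      {p : WPS n χ | ∃ z : Sph n, (∀ j : Fin (n + 1), (j : ℕ) + i ≤ n → z.1 j = 0) ∧
          p = Quot.mk _ z}
        = ⋃ i' < i, cell n χ i') ∧
    (cell n χ 0 = {Quot.mk _ (eN n)}) ∧
    (∀ p : WPS n χ, ∃ i ≤ n, p ∈ cell n χ i) ∧
    (∀ i i', i ≤ n → i' ≤ n → i ≠ i' → cell n χ i ∩ cell n χ i' = ∅) := by
  have hdiv' : ∀ (i : ℕ) (hi : i ≤ n) (j : Fin (n + 1)),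
      (mIdx n i hi : ℕ) ≤ j → χ (mIdx n i hi) ∣ χ j :=
    fun i hi j hj => chi_dvd_of_le n χ hdiv _ _ hj
  refine ⟨fun i hi => gmap_continuous n χ i hi, ?c2, ?c3, ?c4, ?c5, ?c6, ?c7⟩
  case c2 =>
    intro i hi1 hi
    have hmem : ∀ w : {w : Fin i → ℂ // ∑ k, Complex.normSq (w k) < 1},
        gmap n χ i hi ⟨w.1, w.2.le⟩ ∈ cell n χ i := by
      intro w
      refine ⟨⟨zvec n i hi w.1, zvec_mem n i hi w.1 w.2.le⟩, ?_, ?_, rfl⟩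
      · intro j hj; exact zvec_of_lt n i hi w.1 j (by omega)
      · show zvec n i hi w.1 ⟨n - i, _⟩ ≠ 0
        rw [zvec_of_eq n i hi w.1 _ rfl]
        have hs : 0 < Real.sqrt (1 - ∑ k, Complex.normSq (w.1 k)) :=
          Real.sqrt_pos.mpr (by have := w.2; linarith)
        exact_mod_cast hs.ne'
    have hlt : ∀ p : cell n χ i,
        ∑ k, Complex.normSq (Fbar n χ i hi (hdiv' i hi) p.1 k) < 1 := by
      rintro ⟨p, z, hz0, hne, rfl⟩
      show ∑ k, Complex.normSq (Ftil n χ i hi z k) < 1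
      rw [Ftil_sum n χ i hi z hz0 hne]
      have := Complex.normSq_pos.mpr (show z.1 (mIdx n i hi) ≠ 0 from hne)
      linarith
    refine ⟨Homeomorph.mk (Equiv.mk
      (fun w => ⟨gmap n χ i hi ⟨w.1, w.2.le⟩, hmem w⟩)
      (fun p => ⟨Fbar n χ i hi (hdiv' i hi) p.1, hlt p⟩) ?li ?ri) ?ct ?ci, fun w => rfl⟩
    case li =>
      intro w
      exact Subtype.ext (Ftil_zvec n χ i hi w.1 w.2 _)
    case ri =>
      rintro ⟨p, hp⟩
      apply Subtype.ext
      obtain ⟨z, hz0, hne, rfl⟩ := hp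
      exact gmap_Ftil n χ i hi hpos (hdiv' i hi) z hz0 hne _
    case ct =>
      apply Continuous.subtype_mk
      exact (gmap_continuous n χ i hi).comp (Continuous.subtype_mk continuous_subtype_val _)
    case ci =>
      apply Continuous.subtype_mk
      have hsub : cell n χ i ⊆ Ucell n χ i hi := by
        rintro p ⟨z, hz0, hne, rfl⟩; exact ⟨z, hne, rfl⟩
      exact ((continuousOn_Fbar n χ i hi (hdiv' i hi)).mono hsub).restrict
  case c3 =>
    intro i hi1 hi w hw
    refine ⟨⟨zvec n i hi w, zvec_mem n i hi w (le_of_eq hw)⟩, ?_, rfl⟩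
    intro j hj
    show zvec n i hi w j = 0
    rcases lt_or_eq_of_le (show (j : ℕ) ≤ n - i by omega) with h | h
    · exact zvec_of_lt n i hi w j h
    · rw [zvec_of_eq n i hi w j h, hw]
      simp
  case c4 =>
    intro i hi1 hi
    ext p
    simp only [Set.mem_setOf_eq, Set.mem_iUnion]
    constructor
    · rintro ⟨z, hz0, rfl⟩
      obtain ⟨m, hm, hmlow⟩ := min_nonzero n z
      have hmn : n - i < (m : ℕ) := by
        by_contra h
        push_neg at h
        exact hm (hz0 m (by omega))
      have hmle : (m : ℕ) ≤ n := by omega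
      refine ⟨n - (m : ℕ), ⟨by omega, z, ?_, ?_, rfl⟩⟩
      · intro j hj
        exact hmlow j (by omega)
      · have e : (⟨n - (n - (m : ℕ)), Nat.lt_succ_of_le (Nat.sub_le n _)⟩ : Fin (n+1)) = m :=
          Fin.ext (by simp; omega)
        rw [e]
        exact hm
    · rintro ⟨i', hi', z, hz0, hne, rfl⟩
      exact ⟨z, fun j hj => hz0 j (by omega), rfl⟩
  case c5 =>
    ext p
    simp only [Set.mem_singleton_iff]
    constructor
    · rintro ⟨z, hz0, hne, rfl⟩
      have hz0' : ∀ j : Fin (n + 1), (j : ℕ) < n → z.1 j = 0 := fun j hj => hz0 j (by omega)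
      set a := z.1 ⟨n - 0, Nat.lt_succ_of_le (Nat.sub_le n 0)⟩ with hadef
      have hnormsq : Complex.normSq a = 1 := by
        have hsp := sum_split n 0 (Nat.zero_le n) (fun j => Complex.normSq (z.1 j))
        rw [z.2] at hsp
        have h0 : (∑ j : Fin (n - 0), Complex.normSq (z.1 ⟨j, by omega⟩)) = 0 := by
          apply Finset.sum_eq_zero; intro j _
          rw [hz0' ⟨j, by omega⟩ (by simp)]; simp
        rw [h0] at hsp
        simp only [Finset.univ_eq_empty, Finset.sum_empty] at hsp
        rw [← hadef] at hsp
        linarith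
      have habs : ‖a‖ = 1 := by
        apply real_pow_eq_one (norm_nonneg a) (two_ne_zero)
        rw [Complex.sq_norm, hnormsq]
      have hane : a ≠ 0 := hne
      obtain ⟨t, htu⟩ := IsAlgClosed.exists_pow_nat_eq a⁻¹ (hpos (Fin.last n))
      have hu1 : ‖a⁻¹‖ = 1 := by rw [norm_inv, habs]; norm_num
      have ht : ‖t‖ = 1 := abs_of_pow_eq (hpos (Fin.last n)).ne' htu hu1
      apply (quot_mk_eq_iff n χ z (eN n)).mpr
      refine ⟨t, ht, fun j => ?_⟩
      by_cases hj : (j : ℕ) = n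
      · have hjl : j = Fin.last n := Fin.ext (by simpa using hj)
        have hja : z.1 (Fin.last n) = a := rfl
        show (if (j : ℕ) = n then (1 : ℂ) else 0) = _
        rw [if_pos hj, hjl, htu, hja, inv_mul_cancel₀ hane]
      · show (if (j : ℕ) = n then (1 : ℂ) else 0) = _
        rw [if_neg hj, hz0' j (by omega), mul_zero]
    · rintro rfl
      refine ⟨eN n, fun j hj => ?_, ?_, rfl⟩
      · show (if (j : ℕ) = n then (1 : ℂ) else 0) = 0
        rw [if_neg (by omega)]
      · show (if ((⟨n - 0, Nat.lt_succ_of_le (Nat.sub_le n 0)⟩ : Fin (n+1)) : ℕ) = n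
          then (1 : ℂ) else 0) ≠ 0
        simp
  case c6 =>
    intro p
    induction p using Quot.ind with
    | _ z =>
      obtain ⟨m, hm, hmlow⟩ := min_nonzero n z
      have hmle : (m : ℕ) ≤ n := by have := m.2; omega
      refine ⟨n - (m : ℕ), Nat.sub_le n _, z, ?_, ?_, rfl⟩
      · intro j hj
        exact hmlow j (by omega)
      · have e : (⟨n - (n - (m : ℕ)), Nat.lt_succ_of_le (Nat.sub_le n _)⟩ : Fin (n+1)) = m :=
          Fin.ext (by simp; omega)
        rw [e]
        exact hm
  case c7 =>
    intro i i' hi hi' hne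
    ext p
    simp only [Set.mem_inter_iff, Set.mem_empty_iff_false, iff_false]
    rintro ⟨⟨z, hz0, hzm, rfl⟩, ⟨z', hz0', hzm', he⟩⟩
    obtain ⟨t, ht, h⟩ := (quot_mk_eq_iff n χ z z').mp he
    have ht0 : t ≠ 0 := fun h0 => by simp [h0] at ht
    have h1 : z'.1 ⟨n - i, Nat.lt_succ_of_le (Nat.sub_le n i)⟩ ≠ 0 := by
      rw [h]
      exact mul_ne_zero (pow_ne_zero _ ht0) hzm
    have h2 : ¬((n - i) + i' < n) := fun hlt => h1 (hz0' _ hlt)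
    have h3 : ¬((n - i') + i < n) := by
      intro hlt
      have hz4 := hz0 ⟨n - i', Nat.lt_succ_of_le (Nat.sub_le n i')⟩ hlt
      rw [h, hz4, mul_zero] at hzm'
      exact hzm' rfl
    omega
end
end

section
/- Let χ be a divisive weight vector (χ_{j−1} divides χ_j for 1 ≤ j ≤ n) and let 1 ≤ i ≤ n. Then the restriction of g_i to the open unit disc {w ∈ ℂ^i : |w| < 1} is a homeomorphism onto the subspace {[z] ∈ ℙ(χ) : z_0 = ⋯ = z_{n−i−1} = 0, z_{n−i} ≠ 0} of ℙ(χ) (for i = n the condition is simply z_0 ≠ 0). -/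
noncomputable section

open Complex

namespace WPSAux

/-- The index `n - i`. -/
def NI (n i : ℕ) : Fin (n + 1) := ⟨n - i, Nat.lt_succ_of_le (Nat.sub_le n i)⟩

/-- The index `n - i + 1 + k`. -/
def IDX (n i : ℕ) (hi : i ≤ n) (k : Fin i) : Fin (n + 1) :=
  ⟨n - i + 1 + k, by have := k.2; omega⟩

lemma zvec_lt {n i : ℕ} (hi : i ≤ n) (w : Fin i → ℂ) (j : Fin (n + 1))
    (hj : (j : ℕ) < n - i) : zvec n i hi w j = 0 := by
  have h1 : Fin.cast (show n + 1 = n - i + 1 + i by omega) j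
      = Fin.castAdd i (Fin.castAdd 1 ⟨(j : ℕ), hj⟩) := by
    apply Fin.ext; simp
  simp only [zvec]
  rw [h1, Fin.append_left, Fin.append_left]

lemma zvec_mid {n i : ℕ} (hi : i ≤ n) (w : Fin i → ℂ) :
    zvec n i hi w (NI n i)
      = ((Real.sqrt (1 - ∑ k, Complex.normSq (w k)) : ℝ) : ℂ) := by
  have h1 : Fin.cast (show n + 1 = n - i + 1 + i by omega) (NI n i)
      = Fin.castAdd i (Fin.natAdd (n - i) (0 : Fin 1)) := by
    apply Fin.ext; simp [NI]
  simp only [zvec]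
  rw [h1, Fin.append_left, Fin.append_right]

lemma zvec_idx {n i : ℕ} (hi : i ≤ n) (w : Fin i → ℂ) (k : Fin i) :
    zvec n i hi w (IDX n i hi k) = w k := by
  have h1 : Fin.cast (show n + 1 = n - i + 1 + i by omega) (IDX n i hi k)
      = Fin.natAdd (n - i + 1) k := by
    apply Fin.ext; simp [IDX]
  simp only [zvec]
  rw [h1, Fin.append_right]

lemma sum_split {n i : ℕ} (hi : i ≤ n) (f : Fin (n + 1) → ℝ) :
    ∑ j, f j = (∑ j : Fin (n - i), f ⟨(j : ℕ), by omega⟩) + f (NI n i)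
      + ∑ k : Fin i, f (IDX n i hi k) := by
  have key : ∑ j : Fin (n - i + 1 + i), f (Fin.cast (show n - i + 1 + i = n + 1 by omega) j)
      = ∑ j : Fin (n + 1), f j :=
    Fintype.sum_equiv (finCongr (by omega)) _ _ (fun j => rfl)
  rw [← key, Fin.sum_univ_add, Fin.sum_univ_add, Fin.sum_univ_one]
  refine congrArg₂ (· + ·) (congrArg₂ (· + ·)
    (Finset.sum_congr rfl fun j _ => congrArg f (Fin.ext (by simp)))
    (congrArg f (Fin.ext (by simp [NI]))))
    (Finset.sum_congr rfl fun k _ => congrArg f (Fin.ext (by simp [IDX])))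

lemma chain {n : ℕ} (χ : Fin (n + 1) → ℕ)
    (hdiv : ∀ j : Fin n, χ j.castSucc ∣ χ j.succ)
    (a b : ℕ) (hab : a ≤ b) (hb : b ≤ n) (ha' : a < n + 1) (hb' : b < n + 1) :
    χ ⟨a, ha'⟩ ∣ χ ⟨b, hb'⟩ := by
  induction b with
  | zero =>
    obtain rfl : a = 0 := by omega
    exact dvd_refl _
  | succ b ih =>
    rcases Nat.eq_or_lt_of_le hab with h | h
    · exact dvd_of_eq (congrArg χ (Fin.ext h))
    · exact (ih (by omega) (by omega) (by omega)).trans (hdiv ⟨b, by omega⟩)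

end WPSAux


namespace WPSAux

/-- Normalizing phase `σ(z) = conj(z_{n-i}) / |z_{n-i}|` (junk value `0` if `z_{n-i} = 0`). -/
def sgm (n i : ℕ) (z : Sph n) : ℂ :=
  (starRingEnd ℂ) (z.1 (NI n i)) * (((‖z.1 (NI n i)‖) : ℝ) : ℂ)⁻¹

/-- The exponent `χ_{n-i+1+k} / χ_{n-i}`. -/
def mexp (n : ℕ) (χ : Fin (n + 1) → ℕ) (i : ℕ) (hi : i ≤ n) (k : Fin i) : ℕ :=
  χ (IDX n i hi k) / χ (NI n i)

/-- The (would-be) inverse map on the sphere level. -/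
def Hbar (n : ℕ) (χ : Fin (n + 1) → ℕ) (i : ℕ) (hi : i ≤ n) (z : Sph n) (k : Fin i) : ℂ :=
  sgm n i z ^ mexp n χ i hi k * z.1 (IDX n i hi k)

lemma chain_dvd {n i : ℕ} (χ : Fin (n + 1) → ℕ)
    (hdiv : ∀ j : Fin n, χ j.castSucc ∣ χ j.succ) (hi : i ≤ n) (k : Fin i) :
    χ (NI n i) ∣ χ (IDX n i hi k) :=
  chain χ hdiv (n - i) (n - i + 1 + k) (by omega) (by have := k.2; omega) _ _

lemma mexp_mul {n i : ℕ} (χ : Fin (n + 1) → ℕ)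
    (hdiv : ∀ j : Fin n, χ j.castSucc ∣ χ j.succ) (hi : i ≤ n) (k : Fin i) :
    χ (NI n i) * mexp n χ i hi k = χ (IDX n i hi k) :=
  Nat.mul_div_cancel' (chain_dvd χ hdiv hi k)

lemma mexp_pos {n i : ℕ} (χ : Fin (n + 1) → ℕ) (hpos : ∀ j, 0 < χ j)
    (hdiv : ∀ j : Fin n, χ j.castSucc ∣ χ j.succ) (hi : i ≤ n) (k : Fin i) :
    0 < mexp n χ i hi k :=
  Nat.div_pos (Nat.le_of_dvd (hpos _) (chain_dvd χ hdiv hi k)) (hpos _)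

lemma sgm_abs {n i : ℕ} {z : Sph n} (hz : z.1 (NI n i) ≠ 0) :
    ‖sgm n i z‖ = 1 := by
  have ha : ‖z.1 (NI n i)‖ ≠ 0 := norm_ne_zero_iff.mpr hz
  rw [sgm, norm_mul, norm_inv, Complex.norm_conj, Complex.norm_real, Real.norm_eq_abs,
    _root_.abs_of_nonneg (norm_nonneg _), mul_inv_cancel₀ ha]

lemma sgm_normSq {n i : ℕ} {z : Sph n} (hz : z.1 (NI n i) ≠ 0) :
    Complex.normSq (sgm n i z) = 1 := by
  rw [Complex.normSq_eq_norm_sq, sgm_abs hz, one_pow]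

lemma sgm_mul {n i : ℕ} {z : Sph n} (hz : z.1 (NI n i) ≠ 0) :
    sgm n i z * z.1 (NI n i) = ((‖z.1 (NI n i)‖ : ℝ) : ℂ) := by
  set x := z.1 (NI n i) with hx
  have ha : ‖x‖ ≠ 0 := norm_ne_zero_iff.mpr hz
  calc sgm n i z * x = ((starRingEnd ℂ) x * x) * (((‖x‖ : ℝ) : ℂ))⁻¹ := by
        rw [sgm, ← hx]; ring
    _ = (((‖x‖ : ℝ) : ℂ) * ((‖x‖ : ℝ) : ℂ)) * (((‖x‖ : ℝ) : ℂ))⁻¹ := by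
        rw [mul_comm ((starRingEnd ℂ) x) x, Complex.mul_conj, ← Complex.ofReal_mul,
          ← sq, ← Complex.normSq_eq_norm_sq]
    _ = ((‖x‖ : ℝ) : ℂ) := by
        rw [mul_inv_cancel_right₀ (by exact_mod_cast ha)]

lemma Hbar_rel {n i : ℕ} (χ : Fin (n + 1) → ℕ) (hpos : ∀ j, 0 < χ j)
    (hdiv : ∀ j : Fin n, χ j.castSucc ∣ χ j.succ) (hi : i ≤ n)
    (z z' : Sph n) (h : WPrel n χ z z') :
    Hbar n χ i hi z = Hbar n χ i hi z' := by
  obtain ⟨t, ht, hz⟩ := h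
  funext k
  have hmpos : mexp n χ i hi k ≠ 0 := (mexp_pos χ hpos hdiv hi k).ne'
  by_cases h0 : z.1 (NI n i) = 0
  · have h0' : z'.1 (NI n i) = 0 := by rw [hz, h0, mul_zero]
    rw [Hbar, Hbar, sgm, sgm, h0, h0', map_zero, zero_mul, zero_pow hmpos, zero_mul, zero_mul]
  · have ht0 : t ≠ 0 := fun h => by simp [h] at ht
    have habs : ‖z'.1 (NI n i)‖ = ‖z.1 (NI n i)‖ := by
      rw [hz, norm_mul, norm_pow, ht, one_pow, one_mul]
    have habs2 : ‖t ^ χ (NI n i) * z.1 (NI n i)‖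
        = ‖z.1 (NI n i)‖ := by
      rw [norm_mul, norm_pow, ht, one_pow, one_mul]
    have hsgm : sgm n i z' = (starRingEnd ℂ) t ^ χ (NI n i) * sgm n i z := by
      rw [sgm, sgm, hz, habs2, map_mul, map_pow]; ring
    have hct : (starRingEnd ℂ) t ^ χ (IDX n i hi k) * t ^ χ (IDX n i hi k) = 1 := by
      rw [← mul_pow, mul_comm, Complex.mul_conj, Complex.normSq_eq_norm_sq, ht]
      norm_num
    rw [Hbar, Hbar, hsgm, hz (IDX n i hi k), mul_pow, ← pow_mul, mexp_mul χ hdiv hi k]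
    linear_combination (-(sgm n i z ^ mexp n χ i hi k * z.1 (IDX n i hi k))) * hct

lemma Hbar_sum {n i : ℕ} (χ : Fin (n + 1) → ℕ) (hpos : ∀ j, 0 < χ j)
    (hdiv : ∀ j : Fin n, χ j.castSucc ∣ χ j.succ) (hi : i ≤ n) (z : Sph n)
    (hz0 : ∀ j : Fin (n + 1), (j : ℕ) + i < n → z.1 j = 0)
    (hzn : z.1 (NI n i) ≠ 0) :
    ∑ k, Complex.normSq (Hbar n χ i hi z k) = 1 - Complex.normSq (z.1 (NI n i)) := by
  have hsq : ∀ k, Complex.normSq (Hbar n χ i hi z k)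
      = Complex.normSq (z.1 (IDX n i hi k)) := fun k => by
    simp [Hbar, Complex.normSq_mul, map_pow, sgm_normSq hzn]
  simp only [hsq]
  have hz2 := z.2
  rw [sum_split hi (fun j => Complex.normSq (z.1 j))] at hz2
  have hzero : (∑ j : Fin (n - i), Complex.normSq (z.1 ⟨(j : ℕ), by omega⟩)) = 0 := by
    apply Finset.sum_eq_zero
    intro j _
    rw [hz0 _ (by show (j : ℕ) + i < n; have := j.2; omega), Complex.normSq_zero]
  rw [hzero] at hz2
  linarith

lemma Hbar_zvec {n i : ℕ} (χ : Fin (n + 1) → ℕ) (hi : i ≤ n) (w : Fin i → ℂ)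
    (hw : ∑ k, Complex.normSq (w k) < 1) (hmem : ∑ j, Complex.normSq (zvec n i hi w j) = 1) :
    Hbar n χ i hi ⟨zvec n i hi w, hmem⟩ = w := by
  funext k
  set r := Real.sqrt (1 - ∑ k, Complex.normSq (w k)) with hr
  have hrpos : 0 < r := Real.sqrt_pos.2 (by linarith)
  have hmid : (⟨zvec n i hi w, hmem⟩ : Sph n).1 (NI n i) = (r : ℂ) := zvec_mid hi w
  have hsgm : sgm n i ⟨zvec n i hi w, hmem⟩ = 1 := by
    rw [sgm, hmid, Complex.conj_ofReal, Complex.norm_real, Real.norm_eq_abs, abs_of_pos hrpos,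
      mul_inv_cancel₀ (by exact_mod_cast hrpos.ne')]
  rw [Hbar, hsgm, one_pow, one_mul]
  exact zvec_idx hi w k

lemma gmap_Hbar {n i : ℕ} (χ : Fin (n + 1) → ℕ) (hpos : ∀ j, 0 < χ j)
    (hdiv : ∀ j : Fin n, χ j.castSucc ∣ χ j.succ) (hi : i ≤ n) (z : Sph n)
    (hz0 : ∀ j : Fin (n + 1), (j : ℕ) + i < n → z.1 j = 0)
    (hzn : z.1 (NI n i) ≠ 0)
    (hle : ∑ k, Complex.normSq (Hbar n χ i hi z k) ≤ 1) :
    gmap n χ i hi ⟨Hbar n χ i hi z, hle⟩ = Quot.mk _ z := by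
  refine (Quot.sound ?_).symm
  have hsabs : ‖sgm n i z‖ = 1 := sgm_abs hzn
  obtain ⟨t, ht⟩ : ∃ t : ℂ, t ^ χ (NI n i) = sgm n i z :=
    IsAlgClosed.exists_pow_nat_eq _ (hpos _)
  have htabs : ‖t‖ = 1 := by
    have h1 : ‖t‖ ^ χ (NI n i) = 1 := by
      rw [← norm_pow, ht, hsabs]
    rcases lt_trichotomy (‖t‖) 1 with h | h | h
    · exact absurd h1 (by
        have := pow_lt_one₀ (norm_nonneg t) h (hpos (NI n i)).ne'
        linarith)
    · exact h
    · exact absurd h1 (by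
        have := one_lt_pow₀ h (hpos (NI n i)).ne'
        linarith)
  refine ⟨t, htabs, ?_⟩
  intro j
  rcases lt_trichotomy (j : ℕ) (n - i) with hj | hj | hj
  · show zvec n i hi (Hbar n χ i hi z) j = t ^ χ j * z.1 j
    rw [zvec_lt hi _ j hj, hz0 j (by omega), mul_zero]
  · have hjeq : j = NI n i := Fin.ext hj
    subst hjeq
    show zvec n i hi (Hbar n χ i hi z) (NI n i) = t ^ χ (NI n i) * z.1 (NI n i)
    rw [zvec_mid hi, Hbar_sum χ hpos hdiv hi z hz0 hzn,
      show (1 : ℝ) - (1 - Complex.normSq (z.1 (NI n i))) = Complex.normSq (z.1 (NI n i)) by ring,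
      ← Complex.norm_def, ht, sgm_mul hzn]
  · have hk : (j : ℕ) - (n - i) - 1 < i := by have := j.2; omega
    have hjeq : j = IDX n i hi ⟨(j : ℕ) - (n - i) - 1, hk⟩ := by
      apply Fin.ext; simp [IDX]; omega
    rw [hjeq]
    show zvec n i hi (Hbar n χ i hi z) (IDX n i hi ⟨(j : ℕ) - (n - i) - 1, hk⟩)
      = t ^ χ (IDX n i hi ⟨(j : ℕ) - (n - i) - 1, hk⟩) * z.1 (IDX n i hi ⟨(j : ℕ) - (n - i) - 1, hk⟩)
    rw [zvec_idx hi, Hbar, ← ht, ← pow_mul, mexp_mul χ hdiv hi]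

end WPSAux


/-- For a divisive weight vector `χ` and `1 ≤ i ≤ n`, the restriction of `gᵢ` to the
open unit disc `{w ∈ ℂⁱ : |w| < 1}` is a homeomorphism onto the subspace
`{[z] ∈ ℙ(χ) : z₀ = ⋯ = z_{n−i−1} = 0, z_{n−i} ≠ 0}` of `ℙ(χ)` (for `i = n` the
condition is simply `z₀ ≠ 0`). -/
theorem gmap_homeo_onto_cell (n : ℕ) (χ : Fin (n + 1) → ℕ) (hpos : ∀ j, 0 < χ j)
    (hdiv : ∀ j : Fin n, χ j.castSucc ∣ χ j.succ)
    (i : ℕ) (hi1 : 1 ≤ i) (hi : i ≤ n) :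
    ∃ e : {w : Fin i → ℂ // ∑ k, Complex.normSq (w k) < 1} ≃ₜ cell n χ i,
      ∀ w : {w : Fin i → ℂ // ∑ k, Complex.normSq (w k) < 1},
        (e w : WPS n χ) = gmap n χ i hi ⟨w.1, le_of_lt w.2⟩ := by
  classical
  -- the forward map lands in the cell
  have hcell : ∀ w : {w : Fin i → ℂ // ∑ k, Complex.normSq (w k) < 1},
      gmap n χ i hi ⟨w.1, le_of_lt w.2⟩ ∈ cell n χ i := by
    intro w
    refine ⟨⟨zvec n i hi w.1, zvec_mem n i hi w.1 (le_of_lt w.2)⟩, ?_, ?_, rfl⟩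
    · intro j hj
      exact WPSAux.zvec_lt hi w.1 j (by omega)
    · show zvec n i hi w.1 (WPSAux.NI n i) ≠ 0
      rw [WPSAux.zvec_mid hi]
      have hpos' : 0 < Real.sqrt (1 - ∑ k, Complex.normSq (w.1 k)) :=
        Real.sqrt_pos.2 (by linarith [w.2])
      exact_mod_cast hpos'.ne'
  -- the inverse map on the quotient
  let H : WPS n χ → (Fin i → ℂ) :=
    Quot.lift (WPSAux.Hbar n χ i hi) (fun z z' h => WPSAux.Hbar_rel χ hpos hdiv hi z z' h)
  have hmem : ∀ p : cell n χ i, ∑ k, Complex.normSq (H p.1 k) < 1 := by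
    rintro ⟨p, hp⟩
    obtain ⟨z, hz0, hzn, rfl⟩ := hp
    have hH : H (Quot.mk _ z) = WPSAux.Hbar n χ i hi z := rfl
    rw [hH, WPSAux.Hbar_sum χ hpos hdiv hi z hz0 hzn]
    have h1 : 0 < Complex.normSq (z.1 (WPSAux.NI n i)) := Complex.normSq_pos.2 hzn
    linarith
  refine ⟨{ toFun := fun w => ⟨gmap n χ i hi ⟨w.1, le_of_lt w.2⟩, hcell w⟩
            invFun := fun p => ⟨H p.1, hmem p⟩
            left_inv := ?_
            right_inv := ?_
            continuous_toFun := ?_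
            continuous_invFun := ?_ }, fun w => rfl⟩
  · -- left inverse
    intro w
    apply Subtype.ext
    exact WPSAux.Hbar_zvec χ hi w.1 w.2 _
  · -- right inverse
    rintro ⟨p, hp⟩
    obtain ⟨z, hz0, hzn, rfl⟩ := hp
    apply Subtype.ext
    exact WPSAux.gmap_Hbar χ hpos hdiv hi z hz0 hzn _
  · -- continuity of the forward map
    have hc1 : Continuous (fun (w : {w : Fin i → ℂ // ∑ k, Complex.normSq (w k) < 1}) =>
        zvec n i hi w.1) := by
      apply continuous_pi
      intro j
      rcases lt_trichotomy (j : ℕ) (n - i) with hj | hj | hj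
      · have hz : (fun (w : {w : Fin i → ℂ // ∑ k, Complex.normSq (w k) < 1}) =>
            zvec n i hi w.1 j) = fun _ => (0 : ℂ) :=
          funext fun w => WPSAux.zvec_lt hi w.1 j hj
        rw [hz]; exact continuous_const
      · have hjeq : j = WPSAux.NI n i := Fin.ext hj
        subst hjeq
        have hz : (fun (w : {w : Fin i → ℂ // ∑ k, Complex.normSq (w k) < 1}) =>
            zvec n i hi w.1 (WPSAux.NI n i))
            = fun w => ((Real.sqrt (1 - ∑ k, Complex.normSq (w.1 k)) : ℝ) : ℂ) :=
          funext fun w => WPSAux.zvec_mid hi w.1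
        rw [hz]
        apply Complex.continuous_ofReal.comp
        apply Real.continuous_sqrt.comp
        apply Continuous.sub continuous_const
        apply continuous_finset_sum
        intro k _
        exact Complex.continuous_normSq.comp ((continuous_apply k).comp continuous_subtype_val)
      · have hk : (j : ℕ) - (n - i) - 1 < i := by have := j.2; omega
        have hjeq : j = WPSAux.IDX n i hi ⟨(j : ℕ) - (n - i) - 1, hk⟩ := by
          apply Fin.ext
          show (j : ℕ) = n - i + 1 + ((j : ℕ) - (n - i) - 1)
          omega
        rw [hjeq]
        have hz : (fun (w : {w : Fin i → ℂ // ∑ k, Complex.normSq (w k) < 1}) =>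
            zvec n i hi w.1 (WPSAux.IDX n i hi ⟨(j : ℕ) - (n - i) - 1, hk⟩))
            = fun w => w.1 ⟨(j : ℕ) - (n - i) - 1, hk⟩ :=
          funext fun w => WPSAux.zvec_idx hi w.1 _
        rw [hz]
        exact (continuous_apply _).comp continuous_subtype_val
    exact ((continuous_quot_mk.comp (hc1.subtype_mk _)).subtype_mk _)
  · -- continuity of the inverse map
    have hVb : IsOpen {z : Sph n | z.1 (WPSAux.NI n i) ≠ 0} := by
      have hset : {z : Sph n | z.1 (WPSAux.NI n i) ≠ 0}
          = (fun z : Sph n => z.1 (WPSAux.NI n i)) ⁻¹' {(0 : ℂ)}ᶜ := rfl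
      rw [hset]
      exact isOpen_compl_singleton.preimage ((continuous_apply _).comp continuous_subtype_val)
    have hHbarOn : ContinuousOn (WPSAux.Hbar n χ i hi)
        {z : Sph n | z.1 (WPSAux.NI n i) ≠ 0} := by
      rw [continuousOn_pi]
      intro k
      simp only [WPSAux.Hbar, WPSAux.sgm]
      apply ContinuousOn.mul
      · apply ContinuousOn.pow
        apply ContinuousOn.mul
        · exact (Complex.continuous_conj.comp
            ((continuous_apply _).comp continuous_subtype_val)).continuousOn
        · apply ContinuousOn.inv₀
          · exact (Complex.continuous_ofReal.comp (continuous_norm.comp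
              ((continuous_apply _).comp continuous_subtype_val))).continuousOn
          · intro z hz
            simp only [Set.mem_setOf_eq] at hz
            exact_mod_cast norm_ne_zero_iff.mpr hz
      · exact ((continuous_apply _).comp continuous_subtype_val).continuousOn
    have hcont : Continuous (fun p : cell n χ i => H p.1) := by
      rw [continuous_def]
      intro U hU
      let A : WPS n χ → ℝ := Quot.lift (fun z : Sph n => ‖z.1 (WPSAux.NI n i)‖)
        (fun z z' h => by
          obtain ⟨t, ht, hz⟩ := h
          simp only [hz, norm_mul, norm_pow, ht, one_pow, one_mul])
      set V : Set (WPS n χ) := {q | A q ≠ 0} with hV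
      have hsub : (fun p : cell n χ i => H p.1) ⁻¹' U
          = Subtype.val ⁻¹' (H ⁻¹' U ∩ V) := by
        ext p
        constructor
        · intro hpU
          refine ⟨hpU, ?_⟩
          obtain ⟨z, hz0, hzn, hp⟩ := p.2
          show A p.1 ≠ 0
          rw [hp]
          exact norm_ne_zero_iff.mpr hzn
        · exact fun h => h.1
      rw [hsub]
      apply IsOpen.preimage continuous_subtype_val
      rw [← isQuotientMap_quot_mk.isOpen_preimage]
      have hpre : Quot.mk (WPrel n χ) ⁻¹' (H ⁻¹' U ∩ V)
          = {z : Sph n | z.1 (WPSAux.NI n i) ≠ 0} ∩ WPSAux.Hbar n χ i hi ⁻¹' U := by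
        ext z
        simp only [Set.mem_preimage, Set.mem_inter_iff, Set.mem_setOf_eq]
        constructor
        · rintro ⟨h1, h2⟩
          refine ⟨fun h0 => h2 ?_, h1⟩
          show ‖z.1 (WPSAux.NI n i)‖ = 0
          rw [h0]
          simp
        · rintro ⟨h1, h2⟩
          refine ⟨h2, ?_⟩
          show ‖z.1 (WPSAux.NI n i)‖ ≠ 0
          exact norm_ne_zero_iff.mpr h1
      rw [hpre]
      exact hHbarOn.isOpen_inter_preimage hVb hU
    exact hcont.subtype_mk hmem
end
end

section
/- (Corollary 2.6) Let χ be a weight vector with χ_0 = 1. Then the formula (u_1,…,u_n)·[z_0,z_1,…,z_n] = [z_0, u_1 z_1, …, u_n z_n] defines a well-defined continuous action of the torus T^n on ℙ(χ), and for every 0 ≤ i ≤ n this action maps the set {[z] ∈ ℙ(χ) : z_0 = ⋯ = z_{n−i−1} = 0, z_{n−i} ≠ 0} onto itself; in particular, for divisive χ the CW-structure with characteristic maps g_0,…,g_n is invariant under the residual T^n-action. -/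
noncomputable section

open Complex

/-- The compact torus `Tⁿ = {(u₁,…,uₙ) ∈ ℂⁿ : |uⱼ| = 1}`. -/
abbrev Torus (n : ℕ) := {u : Fin n → ℂ // ∀ j, ‖u j‖ = 1}


namespace Cor26

variable {n : ℕ} {χ : Fin (n + 1) → ℕ}

/-- Scaling a point of the sphere: `z₀` fixed, `z_{k+1} ↦ u_k z_{k+1}`. -/
def scl (u : Torus n) (z : Sph n) : Sph n :=
  ⟨fun j => Fin.cases (z.1 0) (fun k => u.1 k * z.1 k.succ) j, by
    have h : ∀ k : Fin n, Complex.normSq (u.1 k * z.1 k.succ) = Complex.normSq (z.1 k.succ) := by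
      intro k
      rw [Complex.normSq_mul, ← Complex.sq_norm (u.1 k), u.2 k]
      ring
    rw [Fin.sum_univ_succ]
    simp only [Fin.cases_zero, Fin.cases_succ, h]
    rw [← Fin.sum_univ_succ (fun j => Complex.normSq (z.1 j))]
    exact z.2⟩

@[simp] lemma scl_zero (u : Torus n) (z : Sph n) : (scl u z).1 0 = z.1 0 := rfl

@[simp] lemma scl_succ (u : Torus n) (z : Sph n) (k : Fin n) :
    (scl u z).1 k.succ = u.1 k * z.1 k.succ := by
  simp [scl]

lemma continuous_scl : Continuous (fun p : Torus n × Sph n => scl p.1 p.2) := by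
  apply Continuous.subtype_mk
  apply continuous_pi
  intro j
  induction j using Fin.cases with
  | zero =>
      simp only [Fin.cases_zero]
      exact (continuous_apply 0).comp (continuous_subtype_val.comp continuous_snd)
  | succ k =>
      simp only [Fin.cases_succ]
      exact ((continuous_apply k).comp (continuous_subtype_val.comp continuous_fst)).mul
        ((continuous_apply k.succ).comp (continuous_subtype_val.comp continuous_snd))

variable (χ) in
def act (u : Torus n) : WPS n χ → WPS n χ :=
  Quot.lift (fun z => Quot.mk _ (scl u z)) (by
    rintro z z' ⟨t, ht, hz⟩
    apply Quot.sound
    refine ⟨t, ht, fun j => ?_⟩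
    induction j using Fin.cases with
    | zero => simp [hz 0]
    | succ k => simp only [scl_succ, hz k.succ]; ring)

lemma act_mk (u : Torus n) (z : Sph n) :
    act χ u (Quot.mk _ z) = Quot.mk _ (scl u z) := rfl

lemma scl_scl (u v : Torus n) (z : Sph n) :
    scl u (scl v z) = scl ⟨fun j => u.1 j * v.1 j, fun j => by
      rw [norm_mul, u.2 j, v.2 j, one_mul]⟩ z := by
  apply Subtype.ext
  funext j
  induction j using Fin.cases with
  | zero => rfl
  | succ k => simp [mul_assoc]

lemma scl_one (one : Torus n) (h : ∀ j, one.1 j = 1) (z : Sph n) : scl one z = z := by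
  apply Subtype.ext
  funext j
  induction j using Fin.cases with
  | zero => rfl
  | succ k => simp [h k]

/-- Rotation by `t ∈ T(χ)` on the sphere. -/
def rot (χ : Fin (n + 1) → ℕ) (t : {t : ℂ // ‖t‖ = 1}) (z : Sph n) : Sph n :=
  ⟨fun j => t.1 ^ (χ j) * z.1 j, by
    have h : ∀ j, Complex.normSq (t.1 ^ χ j * z.1 j) = Complex.normSq (z.1 j) := by
      intro j
      rw [Complex.normSq_mul, ← Complex.sq_norm (t.1 ^ χ j), norm_pow, t.2]
      ring
    simp only [h]; exact z.2⟩

lemma continuous_rot (t : {t : ℂ // ‖t‖ = 1}) : Continuous (rot χ t) := by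
  apply Continuous.subtype_mk
  exact continuous_pi fun j => continuous_const.mul
    ((continuous_apply j).comp continuous_subtype_val)

lemma tne (t : {t : ℂ // ‖t‖ = 1}) : t.1 ≠ 0 := by
  intro h
  have := t.2
  rw [h] at this
  simp at this

lemma wprel_iff (z z' : Sph n) :
    WPrel n χ z z' ↔ ∃ t : {t : ℂ // ‖t‖ = 1}, z' = rot χ t z := by
  constructor
  · rintro ⟨t, ht, h⟩
    exact ⟨⟨t, ht⟩, Subtype.ext (funext h)⟩
  · rintro ⟨t, rfl⟩
    exact ⟨t.1, t.2, fun j => rfl⟩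

lemma wprel_equiv : Equivalence (WPrel n χ) := by
  constructor
  · intro z; exact ⟨1, by simp, fun j => by simp⟩
  · rintro z z' ⟨t, ht, h⟩
    have ht0 : t ≠ 0 := by intro h0; rw [h0] at ht; simp at ht
    refine ⟨t⁻¹, by simp [ht], fun j => ?_⟩
    rw [h j]
    rw [← mul_assoc, ← mul_pow, inv_mul_cancel₀ ht0, one_pow, one_mul]
  · rintro z z' z'' ⟨t, ht, h⟩ ⟨s, hs, h'⟩
    refine ⟨s * t, by simp [ht, hs], fun j => ?_⟩
    rw [h' j, h j, mul_pow]; ring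

lemma mk_eq_mk {z z' : Sph n} :
    Quot.mk (WPrel n χ) z = Quot.mk (WPrel n χ) z' ↔ WPrel n χ z z' := by
  rw [Quot.eq]
  exact (Equivalence.eqvGen_iff wprel_equiv)

lemma openQuotient : IsOpenQuotientMap (Quot.mk (WPrel n χ)) := by
  refine ⟨Quot.exists_rep, continuous_quot_mk, ?_⟩
  intro U hU
  rw [isOpen_coinduced]
  have : Quot.mk (WPrel n χ) ⁻¹' (Quot.mk (WPrel n χ) '' U) =
      ⋃ t : {t : ℂ // ‖t‖ = 1}, rot χ t ⁻¹' U := by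
    ext z'
    simp only [Set.mem_preimage, Set.mem_image, Set.mem_iUnion]
    constructor
    · rintro ⟨z, hz, hzz⟩
      rw [mk_eq_mk, wprel_iff] at hzz
      obtain ⟨t, rfl⟩ := hzz
      have ht : ‖t.1⁻¹‖ = 1 := by simp [t.2]
      refine ⟨⟨t.1⁻¹, ht⟩, ?_⟩
      have : rot χ ⟨t.1⁻¹, ht⟩ (rot χ t z) = z := by
        apply Subtype.ext; funext j
        simp only [rot]
        rw [← mul_assoc, ← mul_pow, inv_mul_cancel₀ (tne t), one_pow, one_mul]
      rw [this]; exact hz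
    · rintro ⟨t, ht⟩
      refine ⟨rot χ t z', ht, ?_⟩
      rw [mk_eq_mk]
      exact wprel_equiv.symm ((wprel_iff _ _).2 ⟨t, rfl⟩)
  rw [this]
  exact isOpen_iUnion fun t => (continuous_rot t).isOpen_preimage U hU

lemma scl_cell (u : Torus n) {i : ℕ} {z : Sph n}
    (h0 : ∀ j : Fin (n + 1), (j : ℕ) + i < n → z.1 j = 0)
    (hne : z.1 ⟨n - i, Nat.lt_succ_of_le (Nat.sub_le n i)⟩ ≠ 0) :
    (∀ j : Fin (n + 1), (j : ℕ) + i < n → (scl u z).1 j = 0) ∧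
      (scl u z).1 ⟨n - i, Nat.lt_succ_of_le (Nat.sub_le n i)⟩ ≠ 0 := by
  have key : ∀ j : Fin (n + 1), ((scl u z).1 j = 0 ↔ z.1 j = 0) := by
    intro j
    induction j using Fin.cases with
    | zero => rfl
    | succ k =>
        rw [scl_succ]
        constructor
        · intro h
          rcases mul_eq_zero.1 h with h | h
          · exact absurd h (by intro h0'; have := u.2 k; rw [h0'] at this; simp at this)
          · exact h
        · intro h; rw [h, mul_zero]
  exact ⟨fun j hj => (key j).2 (h0 j hj), fun h => hne ((key _).1 h)⟩

end Cor26

open Cor26 in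
/-- **Corollary 2.6.** For a weight vector `χ` with `χ₀ = 1`, the formula
`(u₁,…,uₙ)·[z₀,z₁,…,zₙ] = [z₀, u₁z₁, …, uₙzₙ]` defines a well-defined continuous
action of the torus `Tⁿ` on `ℙ(χ)`, and for every `0 ≤ i ≤ n` this action maps the set
`{[z] : z₀ = ⋯ = z_{n−i−1} = 0, z_{n−i} ≠ 0}` onto itself; in particular, for divisive
`χ` the CW-structure with characteristic maps `g₀,…,gₙ` is invariant under the residual
`Tⁿ`-action. -/
theorem residual_torus_action (n : ℕ) (χ : Fin (n + 1) → ℕ) (hpos : ∀ j, 0 < χ j)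
    (hχ0 : χ 0 = 1) :
    ∃ act : Torus n → WPS n χ → WPS n χ,
      -- the action is induced by the stated formula on homogeneous coordinates
      (∀ (u : Torus n) (z z' : Sph n),
        z'.1 0 = z.1 0 → (∀ j : Fin n, z'.1 j.succ = u.1 j * z.1 j.succ) →
        act u (Quot.mk _ z) = Quot.mk _ z') ∧
      -- it is an action of the torus
      (∀ one : Torus n, (∀ j, one.1 j = 1) → ∀ p, act one p = p) ∧
      (∀ u v uv : Torus n, (∀ j, uv.1 j = u.1 j * v.1 j) →
        ∀ p, act uv p = act u (act v p)) ∧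
      -- it is continuous
      Continuous (fun q : Torus n × WPS n χ => act q.1 q.2) ∧
      -- each cell is mapped onto itself
      (∀ u : Torus n, ∀ i ≤ n, act u '' cell n χ i = cell n χ i) := by
  refine ⟨act χ, ?_, ?_, ?_, ?_, ?_⟩
  · intro u z z' h0 hs
    rw [act_mk]
    congr 1
    apply Subtype.ext
    funext j
    induction j using Fin.cases with
    | zero => exact h0.symm
    | succ k => rw [scl_succ, hs k]
  · intro one hone p
    induction p using Quot.ind with
    | _ z => rw [act_mk, scl_one one hone]
  · intro u v uv huv p
    induction p using Quot.ind with
    | _ z =>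
        rw [act_mk, act_mk, act_mk, scl_scl]
        congr 1
        apply Subtype.ext
        funext j
        induction j using Fin.cases with
        | zero => rfl
        | succ k => simp [huv k]
  · have hq : IsOpenQuotientMap
        (Prod.map (id : Torus n → Torus n) (Quot.mk (WPrel n χ))) :=
      IsOpenQuotientMap.id.prodMap openQuotient
    rw [hq.isQuotientMap.continuous_iff]
    have : (fun q : Torus n × WPS n χ => act χ q.1 q.2) ∘
        (Prod.map (id : Torus n → Torus n) (Quot.mk (WPrel n χ))) =
        fun p : Torus n × Sph n => Quot.mk (WPrel n χ) (scl p.1 p.2) := rfl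
    rw [this]
    exact continuous_quot_mk.comp continuous_scl
  · intro u i hi
    have sub : ∀ v : Torus n, act χ v '' cell n χ i ⊆ cell n χ i := by
      rintro v p ⟨q, ⟨z, h0, hne, rfl⟩, rfl⟩
      obtain ⟨h0', hne'⟩ := scl_cell v h0 hne
      exact ⟨scl v z, h0', hne', rfl⟩
    apply Set.Subset.antisymm (sub u)
    intro p hp
    set vinv : Torus n := ⟨fun j => (u.1 j)⁻¹, fun j => by simp [u.2 j]⟩ with hv
    have hinv : ∀ p', act χ u (act χ vinv p') = p' := by
      intro p'
      induction p' using Quot.ind with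
      | _ z =>
          rw [act_mk, act_mk, scl_scl, scl_one]
          intro j
          simp only [hv]
          rw [mul_inv_cancel₀]
          intro h0'; have := u.2 j; rw [h0'] at this; simp at this
    exact ⟨act χ vinv p, sub vinv ⟨p, hp, rfl⟩, hinv p⟩
end
end

section
/- (Criteria 3.4, K-theoretic case) Let J, J' ∈ ℤ^n be linearly independent over ℚ (equivalently, both nonzero and not linearly dependent in ℤ^n). Then the elements 1 − α^J and 1 − α^{J'} are relatively prime in the Laurent polynomial ring S^±_ℤ(α) = ℤ[α_1^{±1},…,α_n^{±1}]: every common divisor of 1 − α^J and 1 − α^{J'} is a unit. -/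
open AddMonoidAlgebra Finsupp

/-- The auxiliary linear functional used to separate `v` from `K`. -/
private def phiAux (n : ℕ) (v K : Fin n → ℤ) : (Fin n → ℤ) →+ ℤ where
  toFun u := (∑ i, K i * K i) * (∑ i, v i * u i) - (∑ i, v i * K i) * (∑ i, K i * u i)
  map_zero' := by simp
  map_add' x y := by
    simp only [Pi.add_apply, mul_add, Finset.sum_add_distrib]
    ring

private lemma phiAux_apply (n : ℕ) (v K u : Fin n → ℤ) :
    phiAux n v K u
      = (∑ i, K i * K i) * (∑ i, v i * u i) - (∑ i, v i * K i) * (∑ i, K i * u i) := rfl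

/-- If `v` and `K` are `ℤ`-independent, there is an integral linear functional vanishing
on `K` but not on `v`. -/
private lemma exists_phi (n : ℕ) (v K : Fin n → ℤ) (hv : v ≠ 0) (hK : K ≠ 0)
    (hindep : ∀ a b : ℤ, a • v + b • K = 0 → a = 0 ∧ b = 0) :
    ∃ φ : (Fin n → ℤ) →+ ℤ, φ K = 0 ∧ φ v ≠ 0 := by
  clear hv
  refine ⟨phiAux n v K, ?_, ?_⟩
  · rw [phiAux_apply]; ring
  · intro h0
    rw [phiAux_apply] at h0
    set A := ∑ i, K i * K i with hA
    set B := ∑ i, v i * K i with hB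
    have hBB : (∑ i, K i * v i) = B := by
      rw [hB]; exact Finset.sum_congr rfl fun i _ => mul_comm _ _
    rw [hBB] at h0
    have hw : ∀ i, A * v i - B * K i = 0 := by
      have hsum : (∑ i, (A * v i - B * K i) * (A * v i - B * K i)) = 0 := by
        have expand : (∑ i, (A * v i - B * K i) * (A * v i - B * K i))
            = A * A * (∑ i, v i * v i) - A * B * (∑ i, v i * K i)
              - A * B * (∑ i, K i * v i) + B * B * (∑ i, K i * K i) := by
          simp only [Finset.mul_sum]
          rw [← Finset.sum_sub_distrib, ← Finset.sum_sub_distrib, ← Finset.sum_add_distrib]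
          exact Finset.sum_congr rfl fun i _ => by ring
        rw [expand, hBB, ← hB, ← hA]
        linear_combination A * h0
      intro i
      have := (Finset.sum_eq_zero_iff_of_nonneg
        (fun i _ => mul_self_nonneg (A * v i - B * K i))).mp hsum i (Finset.mem_univ i)
      exact mul_self_eq_zero.mp this
    have hw0 : A • v + (-B) • K = 0 := by
      funext i
      simpa [sub_eq_add_neg, neg_mul] using hw i
    have hA0 : A = 0 := (hindep A (-B) hw0).1
    have hs : (∑ i, K i * K i) = 0 := by rw [← hA]; exact hA0
    have : K = 0 := by
      funext i
      exact mul_self_eq_zero.mp ((Finset.sum_eq_zero_iff_of_nonneg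
        (fun i _ => mul_self_nonneg (K i))).mp hs i (Finset.mem_univ i))
    exact hK this

/-- In the group algebra `ℤ[ℤⁿ]`, for nonzero `d`, `e` and a linear functional `φ` there are
`φ`-maximal elements in the supports of `d` and `e` whose sum survives in the support of the
product `d * e`.  (Leading-term argument with a lexicographic tie-break.) -/
private lemma exists_max_pair (n : ℕ) (φ : (Fin n → ℤ) →+ ℤ)
    (d e : AddMonoidAlgebra ℤ (Fin n → ℤ)) (hd : d ≠ 0) (he : e ≠ 0) :
    ∃ s ∈ d.coeff.support, ∃ t ∈ e.coeff.support,
      (∀ a ∈ d.coeff.support, φ a ≤ φ s) ∧ (∀ b ∈ e.coeff.support, φ b ≤ φ t) ∧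
      s + t ∈ (d * e).coeff.support := by
  letI : WellFoundedLT (Fin n) := Finite.to_wellFoundedLT
  haveI : IsOrderedCancelAddMonoid (Lex (Fin n → ℤ)) := inferInstance
  set ψ : (Fin n → ℤ) → ℤ ×ₗ Lex (Fin n → ℤ) := fun a => toLex (φ a, toLex a) with hψ
  obtain ⟨s, hs, hsmax⟩ := Finset.exists_max_image d.coeff.support ψ
    (Finsupp.support_nonempty_iff.mpr (mt AddMonoidAlgebra.coeff_eq_zero.mp hd))
  obtain ⟨t, ht, htmax⟩ := Finset.exists_max_image e.coeff.support ψ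
    (Finsupp.support_nonempty_iff.mpr (mt AddMonoidAlgebra.coeff_eq_zero.mp he))
  have fst_le : ∀ x y : Fin n → ℤ, ψ x ≤ ψ y → φ x ≤ φ y := by
    intro x y hxy
    rcases Prod.Lex.le_iff.mp hxy with h | h
    · exact le_of_lt h
    · exact le_of_eq h.1
  have snd_le : ∀ x y : Fin n → ℤ, ψ x ≤ ψ y → φ x = φ y → toLex x ≤ toLex y := by
    intro x y hxy hfst
    rcases Prod.Lex.le_iff.mp hxy with h | h
    · exact absurd hfst (ne_of_lt h)
    · exact h.2
  refine ⟨s, hs, t, ht, fun a ha => fst_le _ _ (hsmax a ha),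
    fun b hb => fst_le _ _ (htmax b hb), ?_⟩
  have huniq : UniqueAdd d.coeff.support e.coeff.support s t := by
    intro a b ha hb hab
    have hφab : φ a + φ b = φ s + φ t := by
      rw [← map_add, ← map_add, hab]
    have hφa : φ a = φ s :=
      le_antisymm (fst_le _ _ (hsmax a ha)) (by linarith [fst_le _ _ (htmax b hb)])
    have hφb : φ b = φ t := by linarith
    have hla : toLex a ≤ toLex s := snd_le _ _ (hsmax a ha) hφa
    have hlb : toLex b ≤ toLex t := snd_le _ _ (htmax b hb) hφb
    have hlab : toLex a + toLex b = toLex s + toLex t := congrArg toLex hab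
    have hAs : toLex a = toLex s := by
      by_contra hne
      exact absurd hlab
        (ne_of_lt (add_lt_add_of_lt_of_le (lt_of_le_of_ne hla hne) hlb))
    have hBt : toLex b = toLex t := by
      by_contra hne
      exact absurd hlab
        (ne_of_lt (add_lt_add_of_le_of_lt hla (lt_of_le_of_ne hlb hne)))
    exact ⟨toLex.injective hAs, toLex.injective hBt⟩
  rw [Finsupp.mem_support_iff, AddMonoidAlgebra.coeff_mul_add_of_uniqueAdd huniq]
  exact mul_ne_zero (Finsupp.mem_support_iff.mp hs) (Finsupp.mem_support_iff.mp ht)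

/-- If `d` divides `1 - α^K` (with `K ≠ 0`) and `φ` is a linear functional vanishing on `K`,
then `φ` is constant on the support of `d`. -/
private lemma key_const (n : ℕ) (φ : (Fin n → ℤ) →+ ℤ) (K : Fin n → ℤ)
    (hK0 : K ≠ 0) (hφK : φ K = 0) (d : AddMonoidAlgebra ℤ (Fin n → ℤ))
    (hdvd : d ∣ 1 - AddMonoidAlgebra.single K 1) :
    ∀ s ∈ d.coeff.support, ∀ s' ∈ d.coeff.support, φ s = φ s' := by
  obtain ⟨e, he⟩ := hdvd
  set f : AddMonoidAlgebra ℤ (Fin n → ℤ) := 1 - AddMonoidAlgebra.single K 1 with hf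
  have hne : AddMonoidAlgebra.single (0 : Fin n → ℤ) (1 : ℤ)
      ≠ AddMonoidAlgebra.single K 1 := by
    intro h
    rcases AddMonoidAlgebra.single_inj.mp h with ⟨h1, _⟩ | ⟨h1, _⟩
    · exact hK0 h1.symm
    · exact one_ne_zero h1
  have hf0 : f ≠ 0 := by
    rw [hf, AddMonoidAlgebra.one_def]
    exact sub_ne_zero_of_ne hne
  have hφsupp : ∀ a ∈ f.coeff.support, φ a = 0 := by
    intro a ha
    have hsub : f.coeff.support ⊆ {0} ∪ {K} := by
      rw [hf, sub_eq_add_neg, AddMonoidAlgebra.one_def, AddMonoidAlgebra.coeff_add,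
        AddMonoidAlgebra.coeff_neg, AddMonoidAlgebra.coeff_single, AddMonoidAlgebra.coeff_single]
      refine Finsupp.support_add.trans ?_
      apply Finset.union_subset_union
      · exact Finsupp.support_single_subset
      · rw [Finsupp.support_neg]
        exact Finsupp.support_single_subset
    rcases Finset.mem_union.mp (hsub ha) with h | h
    · rw [Finset.mem_singleton.mp h]; simp
    · rw [Finset.mem_singleton.mp h]; exact hφK
  have hd0 : d ≠ 0 := by rintro rfl; rw [zero_mul] at he; exact hf0 he
  have he0 : e ≠ 0 := by rintro rfl; rw [mul_zero] at he; exact hf0 he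
  obtain ⟨sP, hsP, tP, htP, hmaxd, hmaxe, hmemP⟩ := exists_max_pair n φ d e hd0 he0
  obtain ⟨sM, hsM, tM, htM, hmind, hmine, hmemM⟩ := exists_max_pair n (-φ) d e hd0 he0
  rw [← he] at hmemP hmemM
  have h1 : φ sP + φ tP = 0 := by
    have := hφsupp _ hmemP
    rwa [map_add] at this
  have h2 : φ sM + φ tM = 0 := by
    have := hφsupp _ hmemM
    rw [map_add] at this
    simpa using this
  intro s hs s' hs'
  have hle1 : φ s ≤ φ sP := hmaxd s hs
  have hle2 : φ s' ≤ φ sP := hmaxd s' hs'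
  have hge1 : φ sM ≤ φ s := by have := hmind s hs; simpa using this
  have hge2 : φ sM ≤ φ s' := by have := hmind s' hs'; simpa using this
  have htle : φ tM ≤ φ tP := hmaxe tM htM
  -- hence φ sP ≤ φ sM and equality throughout
  have : φ sP ≤ φ sM := by linarith
  linarith

/-- **Criteria 3.4, K-theoretic case.**
If `J, J' ∈ ℤⁿ` are linearly independent (over `ℚ`, equivalently over `ℤ`), then the
equivariant K-theoretic Euler classes `1 - α^J` and `1 - α^{J'}` are relatively prime in the
Laurent polynomial ring `S^±_ℤ(α) = ℤ[α₁^{±1},…,αₙ^{±1}]`, realised as the group algebra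
`AddMonoidAlgebra ℤ (Fin n → ℤ)` of `ℤⁿ` over `ℤ` (the monomial `α^J` being
`AddMonoidAlgebra.single J 1`): every common divisor is a unit. -/
theorem kTheory_euler_classes_relatively_prime (n : ℕ) (J J' : Fin n → ℤ)
    (hind : ∀ a b : ℤ, a • J + b • J' = 0 → a = 0 ∧ b = 0) :
    ∀ d : AddMonoidAlgebra ℤ (Fin n → ℤ),
      d ∣ (1 - AddMonoidAlgebra.single J 1) →
      d ∣ (1 - AddMonoidAlgebra.single J' 1) → IsUnit d := by
  intro d hdJ hdJ'
  have hJ : J ≠ 0 := by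
    intro h
    have := (hind 1 0 (by simp [h])).1
    norm_num at this
  have hJ' : J' ≠ 0 := by
    intro h
    have := (hind 0 1 (by simp [h])).2
    norm_num at this
  have hfJ0 : (1 : AddMonoidAlgebra ℤ (Fin n → ℤ)) - AddMonoidAlgebra.single J 1 ≠ 0 := by
    rw [AddMonoidAlgebra.one_def]
    refine sub_ne_zero_of_ne ?_
    intro h
    rcases AddMonoidAlgebra.single_inj.mp h with ⟨h1, _⟩ | ⟨h1, _⟩
    · exact hJ h1.symm
    · exact one_ne_zero h1
  have hd0 : d ≠ 0 := by
    rintro rfl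
    exact hfJ0 (zero_dvd_iff.mp hdJ)
  -- the support of `d` is a single point
  have hconst : ∀ s ∈ d.coeff.support, ∀ s' ∈ d.coeff.support, s = s' := by
    intro s hs s' hs'
    by_contra hne
    have hv : s - s' ≠ 0 := sub_ne_zero_of_ne hne
    by_cases hdep : ∀ a b : ℤ, a • (s - s') + b • J = 0 → a = 0 ∧ b = 0
    · obtain ⟨φ, hφJ, hφv⟩ := exists_phi n (s - s') J hv hJ hdep
      have := key_const n φ J hJ hφJ d hdJ s hs s' hs'
      exact hφv (by rw [map_sub, this, sub_self])
    · by_cases hdep' : ∀ a b : ℤ, a • (s - s') + b • J' = 0 → a = 0 ∧ b = 0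
      · obtain ⟨φ, hφJ', hφv⟩ := exists_phi n (s - s') J' hv hJ' hdep'
        have := key_const n φ J' hJ' hφJ' d hdJ' s hs s' hs'
        exact hφv (by rw [map_sub, this, sub_self])
      · push_neg at hdep hdep'
        obtain ⟨a₁, b₁, h₁, hn₁⟩ := hdep
        obtain ⟨a₂, b₂, h₂, hn₂⟩ := hdep'
        have h₁i : ∀ i, a₁ * (s i - s' i) + b₁ * J i = 0 := by
          intro i
          have := congrFun h₁ i
          simpa [smul_eq_mul, Pi.sub_apply] using this
        have h₂i : ∀ i, a₂ * (s i - s' i) + b₂ * J' i = 0 := by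
          intro i
          have := congrFun h₂ i
          simpa [smul_eq_mul, Pi.sub_apply] using this
        have ha₂ : a₂ ≠ 0 := by
          intro h
          refine hn₂ h ?_
          subst h
          have : b₂ • J' = 0 := by simpa using h₂
          rcases smul_eq_zero.mp this with h | h
          · exact h
          · exact absurd h hJ'
        have hkey : (a₂ * b₁) • J + (-(a₁ * b₂)) • J' = 0 := by
          funext i
          simp only [Pi.add_apply, Pi.smul_apply, smul_eq_mul, Pi.zero_apply]
          linear_combination a₂ * h₁i i - a₁ * h₂i i
        have hb₁ : b₁ = 0 := by
          have := (hind _ _ hkey).1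
          rcases mul_eq_zero.mp this with h | h
          · exact absurd h ha₂
          · exact h
        subst hb₁
        have h10 : a₁ • (s - s') = 0 := by simpa using h₁
        rcases smul_eq_zero.mp h10 with h | h
        · exact hn₁ h rfl
        · exact absurd h hv
  obtain ⟨s₀, hs₀⟩ := Finsupp.support_nonempty_iff.mpr (mt AddMonoidAlgebra.coeff_eq_zero.mp hd0)
  have hsub : d.coeff.support ⊆ {s₀} := fun a ha => Finset.mem_singleton.mpr (hconst a ha s₀ hs₀)
  have hdeq : d = AddMonoidAlgebra.single s₀ (d.coeff s₀) := by
    rw [← AddMonoidAlgebra.coeff_inj, AddMonoidAlgebra.coeff_single, Finsupp.eq_single_iff]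
    exact ⟨hsub, rfl⟩
  set c : ℤ := d.coeff s₀ with hc
  obtain ⟨e, he⟩ := hdJ
  set F : AddMonoidAlgebra ℤ (Fin n → ℤ) := 1 - AddMonoidAlgebra.single J 1 with hF
  have hc1 : F.coeff 0 = 1 := by
    have h1 : F.coeff 0
        = (1 : AddMonoidAlgebra ℤ (Fin n → ℤ)).coeff 0 - (AddMonoidAlgebra.single J (1:ℤ)).coeff 0 :=
      Finsupp.sub_apply _ _ _
    rw [h1, AddMonoidAlgebra.one_def, AddMonoidAlgebra.coeff_single, AddMonoidAlgebra.coeff_single,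
      Finsupp.single_eq_same, Finsupp.single_eq_of_ne' hJ, sub_zero]
  have hmul : (1 : ℤ) = c * e.coeff (-s₀ + 0) := by
    rw [← hc1, he, hdeq, AddMonoidAlgebra.coeff_single_mul_apply]
  have hcu : IsUnit c := IsUnit.of_mul_eq_one (a := c) _ hmul.symm
  have hcc : c * c = 1 := by
    rcases Int.isUnit_iff.mp hcu with h | h <;> rw [h] <;> norm_num
  apply IsUnit.of_mul_eq_one (a := d) (AddMonoidAlgebra.single (-s₀) c)
  rw [hdeq, AddMonoidAlgebra.single_mul_single, add_neg_cancel, hcc,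
    ← AddMonoidAlgebra.one_def]
end

section
/- (Lemma 5.1, lattice form) Let χ = (χ_0,…,χ_n) be a normalized divisive weight vector and let 0 ≤ k < l ≤ n. Define w_{k,l} ∈ ℤ^n by w_{k,l} = e_l if k = 0 and w_{k,l} = e_l − (χ_l/χ_k)·e_k if k ≥ 1. Then w_{k,l} is orthogonal, for the standard inner product on ℝ^n, to r_i for every i ∈ {0,…,n}∖{k,l}, and conversely every vector of ℤ^n orthogonal to all r_i with i ∉ {k,l} is an integer multiple of w_{k,l}; in particular w_{k,l} is a primitive generator of the rank-one lattice of integer vectors vanishing on the cone σ_{k,l}. -/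
/-- The value `χ_k` of a weight vector at a natural-number index `k ≤ n`
(junk value `1` for `k > n`). -/
def chN (n : ℕ) (χ : Fin (n + 1) → ℕ) (k : ℕ) : ℕ :=
  if h : k < n + 1 then χ ⟨k, h⟩ else 1

/-- The rays of the fan `Σ_χ` of a divisive weighted projective space:
`r₀ = (−χ₁,…,−χₙ)` and `r_j = e_j` for `1 ≤ j ≤ n` (coordinates of `ℤⁿ` are numbered
`1,…,n`, so the coordinate `j` is the `Fin n`-index `k` with `k + 1 = j`). -/
def rvec (n : ℕ) (χ : Fin (n + 1) → ℕ) : Fin (n + 1) → Fin n → ℤ :=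
  fun j k => if (j : ℕ) = 0 then -(χ k.succ : ℤ) else if (k : ℕ) + 1 = (j : ℕ) then 1 else 0

/-- The vector `w_{k,l} ∈ ℤⁿ`: `e_l` if `k = 0`, and `e_l − (χ_l/χ_k)·e_k` if `k ≥ 1`. -/
def wvec (n : ℕ) (χ : Fin (n + 1) → ℕ) (k l : ℕ) : Fin n → ℤ :=
  fun m =>
    if (m : ℕ) + 1 = l then 1
    else if (m : ℕ) + 1 = k then -((chN n χ l / chN n χ k : ℕ) : ℤ)
    else 0

-- chain divisibility
lemma chain_dvd (n : ℕ) (χ : Fin (n + 1) → ℕ)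
    (hdiv : ∀ j : Fin n, χ j.castSucc ∣ χ j.succ) :
    ∀ (b : ℕ) (hb : b < n + 1) (a : ℕ) (ha : a < n + 1), a ≤ b → χ ⟨a, ha⟩ ∣ χ ⟨b, hb⟩ := by
  intro b
  induction b with
  | zero =>
    intro hb a ha h
    interval_cases a
    exact dvd_rfl
  | succ b ih =>
    intro hb a ha h
    rcases Nat.lt_or_ge a (b + 1) with h' | h'
    · have hb' : b < n + 1 := by omega
      have := ih hb' a ha (by omega)
      refine this.trans ?_
      have hbn : b < n := by omega
      have := hdiv ⟨b, hbn⟩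
      simpa [Fin.castSucc, Fin.succ, Fin.castAdd, Fin.castLE] using this
    · have : a = b + 1 := by omega
      subst this
      exact dvd_rfl

-- sum against a standard basis ray
lemma sum_rvec_pos (n : ℕ) (χ : Fin (n + 1) → ℕ) (v : Fin n → ℤ)
    (i : Fin (n + 1)) (hi : (i : ℕ) ≠ 0) (hj : (i : ℕ) - 1 < n) :
    ∑ m, v m * rvec n χ i m = v ⟨(i : ℕ) - 1, hj⟩ := by
  rw [Finset.sum_eq_single (⟨(i : ℕ) - 1, hj⟩ : Fin n)]
  · simp [rvec, hi]
    omega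
  · intro m _ hm
    have : ¬((m : ℕ) + 1 = (i : ℕ)) := by
      intro h
      apply hm
      apply Fin.ext
      simp
      omega
    simp [rvec, hi, this]
  · intro h; exact absurd (Finset.mem_univ _) h

/-- **Lemma 5.1, lattice form.** For a normalized divisive weight vector `χ` and
`0 ≤ k < l ≤ n`, the vector `w_{k,l}` is orthogonal to every ray `r_i` with
`i ∉ {k,l}`, and every integer vector orthogonal to all those rays is an integer
multiple of `w_{k,l}`; thus `w_{k,l}` is a primitive generator of the rank-one
lattice of integer vectors vanishing on the cone `σ_{k,l}`. -/
theorem wvec_orthogonal_and_generates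
    (n : ℕ) (χ : Fin (n + 1) → ℕ) (hpos : ∀ j, 0 < χ j)
    (hdiv : ∀ j : Fin n, χ j.castSucc ∣ χ j.succ)
    (hnorm : ∀ j : Fin (n + 1), Finset.gcd (Finset.univ.erase j) χ = 1)
    (k l : ℕ) (hkl : k < l) (hln : l ≤ n) :
    (∀ i : Fin (n + 1), (i : ℕ) ≠ k → (i : ℕ) ≠ l →
      ∑ m, wvec n χ k l m * rvec n χ i m = 0) ∧
    (∀ v : Fin n → ℤ,
      (∀ i : Fin (n + 1), (i : ℕ) ≠ k → (i : ℕ) ≠ l → ∑ m, v m * rvec n χ i m = 0) →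
      ∃ c : ℤ, v = c • wvec n χ k l) := by
  have hl1 : 1 ≤ l := by omega
  have hln' : l < n + 1 := by omega
  have hL : l - 1 < n := by omega
  set L : Fin n := ⟨l - 1, hL⟩ with hLdef
  have hchl : chN n χ l = χ ⟨l, hln'⟩ := by simp [chN, hln']
  constructor
  · intro i hik hil
    by_cases hi0 : (i : ℕ) = 0
    · -- i = 0, so k ≥ 1
      have hk1 : 1 ≤ k := by omega
      have hkn : k < n + 1 := by omega
      have hK : k - 1 < n := by omega
      set K : Fin n := ⟨k - 1, hK⟩ with hKdef
      have hchk : chN n χ k = χ ⟨k, hkn⟩ := by simp [chN, hkn]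
      have hdvd : χ ⟨k, hkn⟩ ∣ χ ⟨l, hln'⟩ := chain_dvd n χ hdiv l hln' k hkn (by omega)
      have hKL : K ≠ L := by
        simp [hKdef, hLdef, Fin.ext_iff]; omega
      have hsum : ∑ m, wvec n χ k l m * rvec n χ i m =
          ∑ m ∈ ({K, L} : Finset (Fin n)), wvec n χ k l m * rvec n χ i m := by
        symm
        apply Finset.sum_subset (Finset.subset_univ _)
        intro m _ hm
        simp only [Finset.mem_insert, Finset.mem_singleton] at hm
        push_neg at hm
        have h1 : ¬((m : ℕ) + 1 = l) := by
          intro h; exact hm.2 (Fin.ext (by simp [hLdef]; omega))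
        have h2 : ¬((m : ℕ) + 1 = k) := by
          intro h; exact hm.1 (Fin.ext (by simp [hKdef]; omega))
        simp [wvec, h1, h2]
      rw [hsum, Finset.sum_pair hKL]
      have hKsucc : (K.succ : Fin (n+1)) = ⟨k, hkn⟩ := by
        apply Fin.ext; simp [hKdef]; omega
      have hLsucc : (L.succ : Fin (n+1)) = ⟨l, hln'⟩ := by
        apply Fin.ext; simp [hLdef]; omega
      have hKval : (K : ℕ) + 1 = k := by simp [hKdef]; omega
      have hLval : (L : ℕ) + 1 = l := by simp [hLdef]; omega
      have hKnotl : ¬((K : ℕ) + 1 = l) := by omega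
      have w1 : wvec n χ k l K = -((χ ⟨l, hln'⟩ / χ ⟨k, hkn⟩ : ℕ) : ℤ) := by
        simp only [wvec]
        rw [if_neg (by omega : ¬((K : ℕ) + 1 = l)), if_pos hKval, hchl, hchk]
      have w2 : wvec n χ k l L = 1 := by
        simp only [wvec]
        rw [if_pos hLval]
      have r1 : rvec n χ i K = -(χ ⟨k, hkn⟩ : ℤ) := by
        simp only [rvec]
        rw [if_pos hi0, hKsucc]
      have r2 : rvec n χ i L = -(χ ⟨l, hln'⟩ : ℤ) := by
        simp only [rvec]
        rw [if_pos hi0, hLsucc]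
      rw [w1, w2, r1, r2]
      have hcancel : (χ ⟨l, hln'⟩ / χ ⟨k, hkn⟩) * χ ⟨k, hkn⟩ = χ ⟨l, hln'⟩ :=
        Nat.div_mul_cancel hdvd
      have hc : ((χ ⟨l, hln'⟩ / χ ⟨k, hkn⟩ : ℕ) : ℤ) * (χ ⟨k, hkn⟩ : ℤ) = (χ ⟨l, hln'⟩ : ℤ) := by
        exact_mod_cast congrArg (Nat.cast : ℕ → ℤ) hcancel
      linear_combination hc
    · -- i ≥ 1
      have hin : (i : ℕ) - 1 < n := by
        have := i.isLt; omega
      rw [sum_rvec_pos n χ _ i hi0 hin]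
      have h1 : ¬(((i : ℕ) - 1) + 1 = l) := by omega
      have h2 : ¬(((i : ℕ) - 1) + 1 = k) := by omega
      simp [wvec, h1, h2]
  · intro v hv
    have hvanish : ∀ m : Fin n, (m : ℕ) + 1 ≠ k → (m : ℕ) + 1 ≠ l → v m = 0 := by
      intro m h1 h2
      have hmn : (m : ℕ) + 1 < n + 1 := by have := m.isLt; omega
      have h := hv ⟨(m : ℕ) + 1, hmn⟩ (by simpa) (by simpa)
      rw [sum_rvec_pos n χ v _ (by simp) (by simpa using m.isLt)] at h
      simpa using h
    by_cases hk0 : k = 0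
    · refine ⟨v L, ?_⟩
      funext m
      simp only [Pi.smul_apply, smul_eq_mul]
      by_cases hm : (m : ℕ) + 1 = l
      · have hmL : m = L := Fin.ext (by simp [hLdef]; omega)
        subst hmL
        simp [wvec, hm]
      · have hmk : (m : ℕ) + 1 ≠ k := by omega
        rw [hvanish m hmk hm]
        simp [wvec, hm, hmk]
    · have hk1 : 1 ≤ k := by omega
      have hkn : k < n + 1 := by omega
      have hK : k - 1 < n := by omega
      set K : Fin n := ⟨k - 1, hK⟩ with hKdef
      have hchk : chN n χ k = χ ⟨k, hkn⟩ := by simp [chN, hkn]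
      have hdvd : χ ⟨k, hkn⟩ ∣ χ ⟨l, hln'⟩ := chain_dvd n χ hdiv l hln' k hkn (le_of_lt hkl)
      have hKL : K ≠ L := by simp [hKdef, hLdef, Fin.ext_iff]; omega
      have hKval : (K : ℕ) + 1 = k := by simp [hKdef]; omega
      have hLval : (L : ℕ) + 1 = l := by simp [hLdef]; omega
      have hKsucc : (K.succ : Fin (n + 1)) = ⟨k, hkn⟩ := by
        apply Fin.ext; simp [hKdef]; omega
      have hLsucc : (L.succ : Fin (n + 1)) = ⟨l, hln'⟩ := by
        apply Fin.ext; simp [hLdef]; omega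
      have h0 := hv 0 (by simpa using (by omega : (0 : ℕ) ≠ k))
        (by simpa using (by omega : (0 : ℕ) ≠ l))
      have hi0 : ((0 : Fin (n + 1)) : ℕ) = 0 := rfl
      have hsum : ∑ m, v m * rvec n χ 0 m =
          ∑ m ∈ ({K, L} : Finset (Fin n)), v m * rvec n χ 0 m := by
        symm
        apply Finset.sum_subset (Finset.subset_univ _)
        intro m _ hm
        simp only [Finset.mem_insert, Finset.mem_singleton] at hm
        push_neg at hm
        have h1 : (m : ℕ) + 1 ≠ k := by
          intro h; exact hm.1 (Fin.ext (by simp [hKdef]; omega))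
        have h2 : (m : ℕ) + 1 ≠ l := by
          intro h; exact hm.2 (Fin.ext (by simp [hLdef]; omega))
        rw [hvanish m h1 h2, zero_mul]
      rw [hsum, Finset.sum_pair hKL] at h0
      have r1 : rvec n χ 0 K = -(χ ⟨k, hkn⟩ : ℤ) := by
        simp only [rvec]
        rw [if_pos hi0, hKsucc]
      have r2 : rvec n χ 0 L = -(χ ⟨l, hln'⟩ : ℤ) := by
        simp only [rvec]
        rw [if_pos hi0, hLsucc]
      rw [r1, r2] at h0
      have hcancel : (χ ⟨l, hln'⟩ / χ ⟨k, hkn⟩) * χ ⟨k, hkn⟩ = χ ⟨l, hln'⟩ :=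
        Nat.div_mul_cancel hdvd
      have hc : ((χ ⟨l, hln'⟩ / χ ⟨k, hkn⟩ : ℕ) : ℤ) * (χ ⟨k, hkn⟩ : ℤ) = (χ ⟨l, hln'⟩ : ℤ) := by
        exact_mod_cast congrArg (Nat.cast : ℕ → ℤ) hcancel
      have hχk0 : (χ ⟨k, hkn⟩ : ℤ) ≠ 0 := by
        exact_mod_cast (hpos ⟨k, hkn⟩).ne'
      have hvK : v K = v L * -((χ ⟨l, hln'⟩ / χ ⟨k, hkn⟩ : ℕ) : ℤ) := by
        apply mul_right_cancel₀ hχk0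
        have : v K * (χ ⟨k, hkn⟩ : ℤ) = -(v L * (χ ⟨l, hln'⟩ : ℤ)) := by linarith
        rw [this, ← hc]; ring
      refine ⟨v L, ?_⟩
      funext m
      simp only [Pi.smul_apply, smul_eq_mul]
      by_cases hm : (m : ℕ) + 1 = l
      · have hmL : m = L := Fin.ext (by simp [hLdef]; omega)
        subst hmL
        simp [wvec, hm]
      · by_cases hm2 : (m : ℕ) + 1 = k
        · have hmK : m = K := Fin.ext (by simp [hKdef]; omega)
          subst hmK
          rw [hvK]
          simp only [wvec]
          rw [if_neg hm, if_pos hm2, hchl, hchk]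
        · rw [hvanish m hm2 hm]
          simp [wvec, hm, hm2]
end

section
/- Let χ = (χ_0,…,χ_n) be a normalized divisive weight vector. For all nonempty subsets A, A' ⊆ {0,…,n}, the cones of the fan Σ_χ satisfy σ_A ∩ σ_{A'} = σ_{A ∪ A'}, where σ_A is the cone spanned by the rays {r_i : i ∉ A}. -/
/-- The cone `σ_A ⊆ ℝⁿ` of the fan `Σ_χ`, spanned by the rays `r_i` with `i ∉ A`:
all nonnegative real linear combinations of those rays. -/
def coneA (n : ℕ) (χ : Fin (n + 1) → ℕ) (A : Finset (Fin (n + 1))) : Set (Fin n → ℝ) :=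
  {x | ∃ c : Fin (n + 1) → ℝ, (∀ i, 0 ≤ c i) ∧ (∀ i ∈ A, c i = 0) ∧
    ∀ m, x m = ∑ i, c i * ((rvec n χ i m : ℤ) : ℝ)}

lemma sum_rvec (n : ℕ) (χ : Fin (n + 1) → ℕ) (c : Fin (n + 1) → ℝ) (m : Fin n) :
    ∑ i, c i * ((rvec n χ i m : ℤ) : ℝ) = c m.succ - c 0 * χ m.succ := by
  rw [Fin.sum_univ_succ]
  have hs : ∀ k : Fin n, c k.succ * ((rvec n χ k.succ m : ℤ) : ℝ)
      = if k = m then c k.succ else 0 := by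
    intro k
    simp only [rvec, Fin.val_succ, Nat.succ_ne_zero, if_false]
    by_cases h : k = m
    · subst h; simp
    · have : ¬ ((m : ℕ) + 1 = (k : ℕ) + 1) := by
        simp [Fin.ext_iff] at h ⊢; omega
      simp [this, h]; intro hmk; exact absurd (Fin.ext hmk.symm) h
  rw [Finset.sum_congr rfl (fun k _ => hs k), Finset.sum_ite_eq' Finset.univ m]
  simp [rvec]
  ring

/-- For a normalized divisive weight vector `χ` and nonempty subsets
`A, A' ⊆ {0,…,n}`, the cones of the fan `Σ_χ` satisfy `σ_A ∩ σ_{A'} = σ_{A ∪ A'}`. -/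
theorem coneA_inter (n : ℕ) (χ : Fin (n + 1) → ℕ) (hpos : ∀ j, 0 < χ j)
    (hdiv : ∀ j : Fin n, χ j.castSucc ∣ χ j.succ)
    (hnorm : ∀ j : Fin (n + 1), Finset.gcd (Finset.univ.erase j) χ = 1) :
    ∀ A A' : Finset (Fin (n + 1)), A.Nonempty → A'.Nonempty →
      coneA n χ A ∩ coneA n χ A' = coneA n χ (A ∪ A') := by
  have main : ∀ A A' : Finset (Fin (n + 1)),
      coneA n χ A ∩ coneA n χ A' ⊆ coneA n χ (A ∪ A') := by
    intro A A' x hx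
    obtain ⟨⟨c, hc0, hcA, hcx⟩, ⟨c', hc'0, hc'A, hc'x⟩⟩ := hx
    -- relation between the two coefficient vectors
    have hrel : ∀ m : Fin n, c' m.succ - c m.succ = (c' 0 - c 0) * χ m.succ := by
      intro m
      have h1 := hcx m
      have h2 := hc'x m
      rw [sum_rvec] at h1 h2
      have := h1.symm.trans h2
      ring_nf at this ⊢
      linarith [this]
    -- wlog on which c 0 is smaller
    rcases le_total (c 0) (c' 0) with hle | hle
    · refine ⟨c, hc0, ?_, hcx⟩
      intro i hi
      rcases Finset.mem_union.mp hi with hi | hi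
      · exact hcA i hi
      · have hci' : c' i = 0 := hc'A i hi
        refine le_antisymm ?_ (hc0 i)
        induction i using Fin.cases with
        | zero => rw [← hci']; exact hle
        | succ m =>
          have h := hrel m
          rw [hci'] at h
          have : (0:ℝ) ≤ (c' 0 - c 0) * χ m.succ :=
            mul_nonneg (by linarith) (Nat.cast_nonneg _)
          linarith
    · refine ⟨c', hc'0, ?_, hc'x⟩
      intro i hi
      rcases Finset.mem_union.mp hi with hi | hi
      · have hci : c i = 0 := hcA i hi
        refine le_antisymm ?_ (hc'0 i)
        induction i using Fin.cases with
        | zero => rw [← hci]; exact hle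
        | succ m =>
          have h := hrel m
          rw [hci] at h
          have : (c' 0 - c 0) * χ m.succ ≤ 0 :=
            mul_nonpos_of_nonpos_of_nonneg (by linarith) (Nat.cast_nonneg _)
          linarith
      · exact hc'A i hi
  intro A A' _ _
  apply Set.Subset.antisymm (main A A')
  rintro x ⟨c, h0, hA, hx⟩
  constructor
  · exact ⟨c, h0, fun i hi => hA i (Finset.mem_union_left _ hi), hx⟩
  · exact ⟨c, h0, fun i hi => hA i (Finset.mem_union_right _ hi), hx⟩
end

section
/- (Algebraic core of Theorem 5.2(3), integral coefficients) Let χ = (χ_0,…,χ_n) be a normalized divisive weight vector. Let Γ = {(g_0,…,g_n) ∈ (ℤ[x_1,…,x_n])^{n+1} : for all 0 ≤ j < i ≤ n, the linear form x_{n−j} − (χ_{n−j}/χ_{n−i})·x_{n−i} divides g_i − g_j}, with the convention x_0 = 0. Then the map h sending g ∈ Γ to the family whose component at a nonempty subset A ⊆ {0,…,n} is the class of g_{n − min A} in ℤ[x_1,…,x_n]/J_A is well defined (for all a, a' ∈ A one has g_{n−a} ≡ g_{n−a'} mod J_A), and h is a ring isomorphism from Γ onto the ring P_H(x;Σ_χ)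 of integral piecewise polynomials on Σ_χ. -/
open MvPolynomial

set_option synthInstance.maxHeartbeats 400000

noncomputable section

/-- The variable `x_k` of `ℤ[x₁,…,xₙ]` (realised as `MvPolynomial (Fin n) ℤ`, with
`x_k = X ⟨k−1⟩` for `1 ≤ k ≤ n`), with the convention `x₀ = 0`. -/
noncomputable def xvar (n : ℕ) (k : ℕ) : MvPolynomial (Fin n) ℤ :=
  if h : 1 ≤ k ∧ k ≤ n then X ⟨k - 1, by omega⟩ else 0

/-- The linear form `x_l − (χ_l/χ_k)·x_k` (convention `x₀ = 0`, so the form for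
`k = 0` is `x_l`, as `χ₀ = 1` for normalized `χ`). -/
noncomputable def lkl (n : ℕ) (χ : Fin (n + 1) → ℕ) (k l : ℕ) : MvPolynomial (Fin n) ℤ :=
  xvar n l - C ((chN n χ l / chN n χ k : ℕ) : ℤ) * xvar n k

/-- The ideal `J_A ⊆ ℤ[x₁,…,xₙ]` generated by the linear forms `x_l − (χ_l/χ_k)·x_k`
for all `k < l` with `k, l ∈ A`. -/
def JA (n : ℕ) (χ : Fin (n + 1) → ℕ) (A : Finset (Fin (n + 1))) :
    Ideal (MvPolynomial (Fin n) ℤ) :=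
  Ideal.span {f | ∃ k l : Fin (n + 1), k ∈ A ∧ l ∈ A ∧ (k : ℕ) < (l : ℕ) ∧
    f = lkl n χ (k : ℕ) (l : ℕ)}

lemma JA_mono (n : ℕ) (χ : Fin (n + 1) → ℕ) {A A' : Finset (Fin (n + 1))} (h : A ⊆ A') :
    JA n χ A ≤ JA n χ A' :=
  Ideal.span_mono (by rintro f ⟨k, l, hk, hl, hkl, rfl⟩; exact ⟨k, l, h hk, h hl, hkl, rfl⟩)

/-- The GKM ring `Γ`: tuples `(g₀,…,gₙ)` of polynomials such that
`x_{n−j} − (χ_{n−j}/χ_{n−i})·x_{n−i}` divides `gᵢ − gⱼ` for all `0 ≤ j < i ≤ n`. -/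
def GammaH (n : ℕ) (χ : Fin (n + 1) → ℕ) :
    Subring (Fin (n + 1) → MvPolynomial (Fin n) ℤ) where
  carrier := {g | ∀ i j : Fin (n + 1), (j : ℕ) < (i : ℕ) →
    lkl n χ (n - (i : ℕ)) (n - (j : ℕ)) ∣ g i - g j}
  zero_mem' := by intro i j _; simp
  one_mem' := by intro i j _; simp
  add_mem' := by
    intro a b ha hb i j hij
    simpa [add_sub_add_comm] using dvd_add (ha i j hij) (hb i j hij)
  neg_mem' := by
    intro a ha i j hij
    simpa [neg_sub_neg, ← sub_eq_neg_add] using (ha i j hij).neg_right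
  mul_mem' := by
    intro a b ha hb i j hij
    have e : a i * b i - a j * b j = (a i - a j) * b i + a j * (b i - b j) := by ring
    have : lkl n χ (n - (i : ℕ)) (n - (j : ℕ)) ∣ a i * b i - a j * b j := by
      rw [e]; exact dvd_add ((ha i j hij).mul_right _) ((hb i j hij).mul_left _)
    simpa using this

/-- The nonempty subsets of `{0,…,n}`, indexing the cones of the fan `Σ_χ`. -/
abbrev NESet (n : ℕ) := {A : Finset (Fin (n + 1)) // A.Nonempty}

/-- The ring `P_H(x;Σ_χ)` of integral piecewise polynomials on the fan `Σ_χ`: families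
`(f_A)` over the nonempty `A ⊆ {0,…,n}`, with `f_A ∈ ℤ[x]/J_A`, compatible under the
projections `ℤ[x]/J_A → ℤ[x]/J_{A'}` for `A ⊆ A'`. -/
def PHring (n : ℕ) (χ : Fin (n + 1) → ℕ) :
    Subring (Π A : NESet n, MvPolynomial (Fin n) ℤ ⧸ JA n χ A.1) where
  carrier := {f | ∀ (A A' : NESet n) (h : A.1 ⊆ A'.1),
    Ideal.Quotient.factor (JA_mono n χ h) (f A) = f A'}
  zero_mem' := by intro A A' h; simp only [Pi.zero_apply, map_zero]
  one_mem' := by intro A A' h; simp only [Pi.one_apply, map_one]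
  add_mem' := by
    intro a b ha hb A A' h
    simp only [Pi.add_apply, map_add, ha A A' h, hb A A' h]
  neg_mem' := by
    intro a ha A A' h
    simp only [Pi.neg_apply, map_neg, ha A A' h]
  mul_mem' := by
    intro a b ha hb A A' h
    simp only [Pi.mul_apply, map_mul, ha A A' h, hb A A' h]

/-- The index flip `a ↦ n − a` on `Fin (n+1)`. -/
def sig (n : ℕ) (a : Fin (n + 1)) : Fin (n + 1) :=
  ⟨n - (a : ℕ), Nat.lt_succ_of_le (Nat.sub_le n _)⟩

lemma sig_sig (n : ℕ) (a : Fin (n + 1)) : sig n (sig n a) = a := by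
  have : (a : ℕ) ≤ n := Nat.lt_succ_iff.mp a.isLt
  simp [sig, Nat.sub_sub_self this]

lemma welldef_aux (n : ℕ) (χ : Fin (n + 1) → ℕ) {g : Fin (n + 1) → MvPolynomial (Fin n) ℤ}
    (hg : g ∈ GammaH n χ) {A : Finset (Fin (n + 1))} {a a' : Fin (n + 1)}
    (ha : a ∈ A) (ha' : a' ∈ A) (hlt : (a : ℕ) < (a' : ℕ)) :
    Ideal.Quotient.mk (JA n χ A) (g (sig n a)) = Ideal.Quotient.mk (JA n χ A) (g (sig n a')) := by
  have hle : (a' : ℕ) ≤ n := Nat.lt_succ_iff.mp a'.isLt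
  have hji : ((sig n a' : Fin (n + 1)) : ℕ) < ((sig n a : Fin (n + 1)) : ℕ) := by
    simp only [sig]; omega
  have hd := hg (sig n a) (sig n a') hji
  have ea : n - ((sig n a : Fin (n + 1)) : ℕ) = (a : ℕ) := by
    simp only [sig]; omega
  have ea' : n - ((sig n a' : Fin (n + 1)) : ℕ) = (a' : ℕ) := by
    simp only [sig]; omega
  rw [ea, ea'] at hd
  obtain ⟨c, hc⟩ := hd
  rw [Ideal.Quotient.eq, hc]
  exact Ideal.mul_mem_right _ _ (Ideal.subset_span ⟨a, a', ha, ha', hlt, rfl⟩)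

lemma welldef (n : ℕ) (χ : Fin (n + 1) → ℕ) {g : Fin (n + 1) → MvPolynomial (Fin n) ℤ}
    (hg : g ∈ GammaH n χ) {A : Finset (Fin (n + 1))} {a a' : Fin (n + 1)}
    (ha : a ∈ A) (ha' : a' ∈ A) :
    Ideal.Quotient.mk (JA n χ A) (g (sig n a)) = Ideal.Quotient.mk (JA n χ A) (g (sig n a')) := by
  rcases lt_trichotomy (a : ℕ) (a' : ℕ) with h | h | h
  · exact welldef_aux n χ hg ha ha' h
  · rw [Fin.ext (by exact h : (a : ℕ) = (a' : ℕ))]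
  · exact (welldef_aux n χ hg ha' ha h).symm

lemma JA_singleton (n : ℕ) (χ : Fin (n + 1) → ℕ) (a : Fin (n + 1)) :
    JA n χ {a} = ⊥ := by
  rw [JA, Ideal.span_eq_bot]
  rintro f ⟨k, l, hk, hl, hkl, rfl⟩
  simp only [Finset.mem_singleton] at hk hl
  subst hk; subst hl; omega

lemma toPH_mem (n : ℕ) (χ : Fin (n + 1) → ℕ) (g : GammaH n χ) :
    (fun A : NESet n => Ideal.Quotient.mk (JA n χ A.1) (g.1 (sig n (A.1.min' A.2))))
      ∈ PHring n χ := by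
  intro A A' h
  rw [Ideal.Quotient.factor_mk]
  exact welldef n χ g.2 (h (A.1.min'_mem A.2)) (A'.1.min'_mem A'.2)

/-- The forward ring homomorphism `Γ → P_H`. -/
def phHom (n : ℕ) (χ : Fin (n + 1) → ℕ) : GammaH n χ →+* PHring n χ where
  toFun g := ⟨fun A => Ideal.Quotient.mk (JA n χ A.1) (g.1 (sig n (A.1.min' A.2))),
    toPH_mem n χ g⟩
  map_one' := by ext A; simp
  map_mul' g g' := by ext A; simp
  map_zero' := by ext A; simp
  map_add' g g' := by ext A; simp

lemma phHom_bij (n : ℕ) (χ : Fin (n + 1) → ℕ) : Function.Bijective (phHom n χ) := by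
  constructor
  · intro g g' h
    apply Subtype.ext
    funext i
    have := congrArg (fun x : PHring n χ => x.1 ⟨{sig n i}, Finset.singleton_nonempty _⟩) h
    simp only [phHom, RingHom.coe_mk, MonoidHom.coe_mk, OneHom.coe_mk] at this
    rw [Finset.min'_singleton, sig_sig] at this
    have h2 : g.1 i - g'.1 i ∈ JA n χ {sig n i} := (Ideal.Quotient.eq).mp this
    rw [JA_singleton, Ideal.mem_bot, sub_eq_zero] at h2
    exact h2
  · intro f
    have hsurj : ∀ i : Fin (n + 1), ∃ p : MvPolynomial (Fin n) ℤ,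
        Ideal.Quotient.mk (JA n χ {sig n i}) p
          = f.1 ⟨{sig n i}, Finset.singleton_nonempty _⟩ :=
      fun i => Ideal.Quotient.mk_surjective _
    choose g hgspec using hsurj
    -- key: for any A and a ∈ A, mk_{J_A} (g (sig a)) = f A
    have key : ∀ (A : NESet n) (a : Fin (n + 1)), a ∈ A.1 →
        Ideal.Quotient.mk (JA n χ A.1) (g (sig n a)) = f.1 A := by
      intro A a ha
      have hsub : ({sig n (sig n a)} : Finset (Fin (n + 1))) ⊆ A.1 := by
        rw [sig_sig]; exact Finset.singleton_subset_iff.mpr ha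
      have := f.2 ⟨{sig n (sig n a)}, Finset.singleton_nonempty _⟩ A hsub
      rw [← hgspec (sig n a), Ideal.Quotient.factor_mk] at this
      exact this
    have hgmem : g ∈ GammaH n χ := by
      intro i j hij
      have hin : (i : ℕ) ≤ n := Nat.lt_succ_iff.mp i.isLt
      set a : Fin (n + 1) := sig n i with hadef
      set a' : Fin (n + 1) := sig n j with ha'def
      have hlt : (a : ℕ) < (a' : ℕ) := by simp only [hadef, ha'def, sig]; omega
      set A : NESet n := ⟨{a, a'}, Finset.insert_nonempty _ _⟩ with hAdef
      have hmemA : a ∈ A.1 := Finset.mem_insert_self _ _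
      have hmemA' : a' ∈ A.1 := Finset.mem_insert_of_mem (Finset.mem_singleton_self _)
      have h1 := key A a hmemA
      have h2 := key A a' hmemA'
      rw [sig_sig] at h1 h2
      have hmem : g i - g j ∈ JA n χ A.1 := (Ideal.Quotient.eq).mp (h1.trans h2.symm)
      have hsp : JA n χ A.1 ≤ Ideal.span {lkl n χ (a : ℕ) (a' : ℕ)} := by
        rw [JA, Ideal.span_le]
        rintro x ⟨k, l, hk, hl, hkl, rfl⟩
        simp only [hAdef, Finset.mem_insert, Finset.mem_singleton] at hk hl
        have hk' : k = a := by
          rcases hk with rfl | rfl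
          · rfl
          · rcases hl with rfl | rfl <;> [omega; omega]
        subst hk'
        have hl' : l = a' := by
          rcases hl with rfl | rfl
          · omega
          · rfl
        subst hl'
        exact Ideal.subset_span rfl
      have := Ideal.mem_span_singleton.mp (hsp hmem)
      have ea : (a : ℕ) = n - (i : ℕ) := rfl
      have ea' : (a' : ℕ) = n - (j : ℕ) := rfl
      rwa [ea, ea'] at this
    refine ⟨⟨g, hgmem⟩, ?_⟩
    apply Subtype.ext
    funext A
    exact key A (A.1.min' A.2) (A.1.min'_mem A.2)

/-- **Algebraic core of Theorem 5.2(3), integral coefficients.**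
For a normalized divisive weight vector `χ`, the map sending `g ∈ Γ` to the family
whose component at a nonempty `A ⊆ {0,…,n}` is the class of `g_{n − min A}` in
`ℤ[x]/J_A` is well defined (`g_{n−a} ≡ g_{n−a′}` mod `J_A` for all `a, a′ ∈ A`) and is
a ring isomorphism from `Γ` onto the ring `P_H(x;Σ_χ)` of integral piecewise
polynomials on `Σ_χ`. -/
theorem gamma_iso_piecewise_polynomials (n : ℕ) (χ : Fin (n + 1) → ℕ)
    (hpos : ∀ j, 0 < χ j)
    (hdiv : ∀ j : Fin n, χ j.castSucc ∣ χ j.succ)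
    (hnorm : ∀ j : Fin (n + 1), Finset.gcd (Finset.univ.erase j) χ = 1) :
    (∀ g ∈ GammaH n χ, ∀ A : Finset (Fin (n + 1)), A.Nonempty →
      ∀ a ∈ A, ∀ a' ∈ A,
        Ideal.Quotient.mk (JA n χ A)
            (g ⟨n - (a : ℕ), Nat.lt_succ_of_le (Nat.sub_le n _)⟩) =
          Ideal.Quotient.mk (JA n χ A)
            (g ⟨n - (a' : ℕ), Nat.lt_succ_of_le (Nat.sub_le n _)⟩)) ∧
    ∃ φ : GammaH n χ ≃+* PHring n χ,
      ∀ (g : GammaH n χ) (A : NESet n),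
        (φ g).1 A = Ideal.Quotient.mk (JA n χ A.1)
          (g.1 ⟨n - (A.1.min' A.2 : ℕ), Nat.lt_succ_of_le (Nat.sub_le n _)⟩) := by
  refine ⟨fun g hg A _ a ha a' ha' => welldef n χ hg ha ha', ?_⟩
  exact ⟨RingEquiv.ofBijective (phHom n χ) (phHom_bij n χ), fun g A => rfl⟩
end
end

section
/- (Example 4.9, cohomology, module structure) The ring P_H(x) of integral piecewise polynomials on the fan Σ_{(1,1,2)} is a free module over ℤ[x_1,x_2] (acting diagonally) with basis {(1,1,1), p, q}, where p = (0, 2x_1, x_2) and q = (0, x_1(2x_1 − x_2), 0). -/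
open MvPolynomial

noncomputable section

/-- The ring of integral piecewise polynomials on the fan `Σ_{(1,1,2)}` of `ℙ(1,1,2)`:
triples `(f₀, f₁, f₂)` of polynomials in `ℤ[x₁,x₂]` (the component `fᵢ` attached to the
maximal cone `σᵢ`) with `x₁ ∣ f₀ − f₁`, `x₂ ∣ f₀ − f₂` and `(2x₁ − x₂) ∣ f₁ − f₂`.
Here `x₁ = X 0` and `x₂ = X 1` in `MvPolynomial (Fin 2) ℤ`. -/
def PH112 : Set (Fin 3 → MvPolynomial (Fin 2) ℤ) :=
  {f | X 0 ∣ f 0 - f 1 ∧ X 1 ∣ f 0 - f 2 ∧ (2 * X 0 - X 1) ∣ f 1 - f 2}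

/-- The piecewise polynomial `p = (0, 2x₁, x₂)`. -/
def pElt : Fin 3 → MvPolynomial (Fin 2) ℤ := ![0, 2 * X 0, X 1]

/-- The piecewise polynomial `q = (0, x₁(2x₁ − x₂), 0)`. -/
def qElt : Fin 3 → MvPolynomial (Fin 2) ℤ := ![0, X 0 * (2 * X 0 - X 1), 0]

lemma primeX0 : Prime (X 0 : MvPolynomial (Fin 2) ℤ) := by
  have h := (MulEquiv.prime_iff (finSuccEquiv ℤ 1).toMulEquiv (p := (X 0 : MvPolynomial (Fin 2) ℤ))).symm
  rw [h]
  have : (finSuccEquiv ℤ 1).toMulEquiv (X 0 : MvPolynomial (Fin 2) ℤ) = Polynomial.X := by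
    simpa using finSuccEquiv_X_zero (R := ℤ) (n := 1)
  rw [this]
  exact Polynomial.prime_X

lemma X0_not_dvd : ¬ (X 0 : MvPolynomial (Fin 2) ℤ) ∣ (2 * X 0 - X 1) := by
  rintro ⟨t, ht⟩
  have := congrArg (eval ![0, 1]) ht
  simp at this

/-- **Example 4.9, cohomology, module structure.**
`P_H(x)` for `Σ_{(1,1,2)}` is a free module over `ℤ[x₁,x₂]` (acting diagonally) with
basis `{1, p, q}`: the diagonal constants, `p` and `q` lie in `P_H(x)`, and every
`f ∈ P_H(x)` is uniquely `a·1 + b·p + c·q` with `a, b, c ∈ ℤ[x₁,x₂]`. -/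
theorem PH112_free_module :
    pElt ∈ PH112 ∧ qElt ∈ PH112 ∧
    (∀ a : MvPolynomial (Fin 2) ℤ, (fun _ => a : Fin 3 → MvPolynomial (Fin 2) ℤ) ∈ PH112) ∧
    ∀ f ∈ PH112,
      ∃! abc : MvPolynomial (Fin 2) ℤ × MvPolynomial (Fin 2) ℤ × MvPolynomial (Fin 2) ℤ,
        f = fun k => abc.1 + abc.2.1 * pElt k + abc.2.2 * qElt k := by
  refine ⟨⟨⟨-2, by simp [pElt]; ring⟩, ⟨-1, by simp [pElt]⟩, ⟨1, by simp [pElt]⟩⟩,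
    ⟨⟨-(2 * X 0 - X 1), by simp [qElt]; ring⟩, ⟨0, by simp [qElt]⟩, ⟨X 0, by simp [qElt]; ring⟩⟩,
    fun a => ⟨⟨0, by simp⟩, ⟨0, by simp⟩, ⟨0, by simp⟩⟩, ?_⟩
  rintro f ⟨⟨u, hu⟩, ⟨g, hg⟩, ⟨v, hv⟩⟩
  have hd : (X 0 : MvPolynomial (Fin 2) ℤ) ∣ (2 * X 0 - X 1) * (v + g) :=
    ⟨2 * g - u, by linear_combination -hv + hg - hu⟩
  obtain ⟨w, hw⟩ : (X 0 : MvPolynomial (Fin 2) ℤ) ∣ v + g :=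
    (primeX0.dvd_or_dvd hd).resolve_left X0_not_dvd
  have hX1 : (X 1 : MvPolynomial (Fin 2) ℤ) ≠ 0 := X_ne_zero 1
  have hX2 : (X 0 * (2 * X 0 - X 1) : MvPolynomial (Fin 2) ℤ) ≠ 0 := by
    intro h
    have := congrArg (eval ![1, 1]) h
    simp at this
  refine ⟨⟨f 0, -g, w⟩, ?_, ?_⟩
  · funext k
    fin_cases k
    · simp [pElt, qElt]
    · show f 1 = f 0 + -g * (2 * X 0) + w * (X 0 * (2 * X 0 - X 1))
      linear_combination hv - hg + (2 * X 0 - X 1) * hw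
    · show f 2 = f 0 + -g * X 1 + w * 0
      linear_combination -hg
  · rintro ⟨a', b', c'⟩ hy
    have h0 := congrFun hy 0
    have h1 := congrFun hy 1
    have h2 := congrFun hy 2
    simp only [pElt, qElt, Matrix.cons_val_zero, Matrix.cons_val_one, Matrix.head_cons,
      Matrix.cons_val_two, Matrix.tail_cons, mul_zero, add_zero] at h0 h1 h2
    have ha : a' = f 0 := by linear_combination -h0
    have hb : b' = -g := by
      have h : X 1 * (b' + g) = 0 := by linear_combination h0 - h2 - hg
      rcases mul_eq_zero.mp h with h | h
      · exact absurd h hX1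
      · linear_combination h
    have hc : c' = w := by
      have h : (X 0 * (2 * X 0 - X 1)) * (c' - w) = 0 := by
        linear_combination -h1 + h0 - 2 * X 0 * hb + hv - hg + (2 * X 0 - X 1) * hw
      rcases mul_eq_zero.mp h with h | h
      · exact absurd h hX2
      · linear_combination h
    simp [ha, hb, hc, Prod.ext_iff]
end
end

section
/- (Canonical presentation of the Laurent face algebra) Let K be a finite abstract simplicial complex on the vertex set {1,…,m}. Then the ring homomorphism from the Laurent polynomial ring S^±_ℤ(β_1,…,β_m) = ℤ[β_1^{±1},…,β_m^{±1}] to the Laurent face algebra F_K[β;K], whose component at a face σ sends β_j to β_j for j ∈ σ and to 1 for j ∉ σ, is surjective with kernel the ideal generated by the elements (1−β)_ω = ∏_{j∈ω}(1−β_j) for all non-faces ω ∉ K; hence there is a canonical isomorphism S^±_ℤ(β_1,…,β_m)/((1−β)_ω : ω ∉ K) ≅ F_K[β;K] of graded S^±_ℤ(β)-algebras. -/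
noncomputable section

/-- The Laurent polynomial ring `S^±_ℤ(β₁,…,β_m) = ℤ[β₁^{±1},…,β_m^{±1}]`, realised
as the group algebra of `ℤ^m` over `ℤ`; the monomial `β^v` is
`AddMonoidAlgebra.single v 1`. -/
abbrev LaurentB (m : ℕ) := AddMonoidAlgebra ℤ (Fin m → ℤ)

/-- Projection of an exponent vector onto the coordinates in `σ`. -/
def projExp (m : ℕ) (σ : Finset (Fin m)) : (Fin m → ℤ) →+ (Fin m → ℤ) where
  toFun v := fun j => if j ∈ σ then v j else 0
  map_zero' := by funext j; simp
  map_add' := by intro v w; funext j; by_cases h : j ∈ σ <;> simp [h]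

/-- The ring homomorphism `S^±_ℤ(β₁,…,β_m) → S^±_ℤ(β₁,…,β_m)` sending `β_j ↦ β_j` for
`j ∈ σ` and `β_j ↦ 1` for `j ∉ σ`; its image is the Laurent polynomial ring
`S^±(β(σ))` on the variables `β_j` with `j ∈ σ`. -/
def projR (m : ℕ) (σ : Finset (Fin m)) : LaurentB m →+* LaurentB m :=
  AddMonoidAlgebra.mapDomainRingHom ℤ (projExp m σ)

namespace LFAhelp

variable {m : ℕ}

lemma projR_apply (σ : Finset (Fin m)) (x : LaurentB m) :
    (projR m σ x).coeff = Finsupp.mapDomain (projExp m σ) x.coeff := rfl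

lemma projR_single (σ : Finset (Fin m)) (v : Fin m → ℤ) (b : ℤ) :
    projR m σ (AddMonoidAlgebra.single v b) = AddMonoidAlgebra.single (projExp m σ v) b := by
  exact AddMonoidAlgebra.mapDomain_single

lemma projExp_apply (σ : Finset (Fin m)) (v : Fin m → ℤ) (j : Fin m) :
    projExp m σ v j = if j ∈ σ then v j else 0 := rfl

lemma part1 (σ : Finset (Fin m)) (x : LaurentB m) :
    ∀ v ∈ (projR m σ x).coeff.support, ∀ j, v j ≠ 0 → j ∈ σ := by
  classical
  intro v hv j hj
  rw [projR_apply] at hv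
  obtain ⟨w, -, rfl⟩ := Finset.mem_image.1 (Finsupp.mapDomain_support hv)
  by_contra hjσ
  rw [projExp_apply, if_neg hjσ] at hj
  exact hj rfl

lemma projExp_projExp (σ τ : Finset (Fin m)) (v : Fin m → ℤ) :
    projExp m σ (projExp m τ v) = projExp m (σ ∩ τ) v := by
  funext j
  simp only [projExp_apply, Finset.mem_inter]
  by_cases h1 : j ∈ σ <;> by_cases h2 : j ∈ τ <;> simp [h1, h2]

lemma projR_projR (σ τ : Finset (Fin m)) (x : LaurentB m) :
    projR m σ (projR m τ x) = projR m (σ ∩ τ) x := by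
  apply AddMonoidAlgebra.coeff_injective
  rw [projR_apply, projR_apply, projR_apply, ← Finsupp.mapDomain_comp]
  have : (⇑(projExp m σ) ∘ ⇑(projExp m τ)) = ⇑(projExp m (σ ∩ τ)) :=
    funext (projExp_projExp σ τ)
  rw [this]

lemma projR_eq_self (σ : Finset (Fin m)) (x : LaurentB m)
    (h : ∀ v ∈ x.coeff.support, ∀ j, v j ≠ 0 → j ∈ σ) : projR m σ x = x := by
  apply AddMonoidAlgebra.coeff_injective
  rw [projR_apply]
  nth_rewrite 2 [show x.coeff = Finsupp.mapDomain id x.coeff from Finsupp.mapDomain_id.symm]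
  apply Finsupp.mapDomain_congr
  intro v hv
  funext j
  by_cases hj : j ∈ σ
  · simp [projExp_apply, hj]
  · have : v j = 0 := by by_contra h0; exact hj (h v hv j h0)
    simp [projExp_apply, hj, this]

-- merged

variable {m : ℕ}

lemma surj : ∀ (K : Finset (Finset (Fin m))),
    (∀ σ ∈ K, ∀ τ ⊆ σ, τ ∈ K) →
    ∀ f : {σ : Finset (Fin m) // σ ∈ K} → LaurentB m,
      (∀ σ, ∀ v ∈ (f σ).coeff.support, ∀ j, v j ≠ 0 → j ∈ σ.1) →
      (∀ σ τ : {σ : Finset (Fin m) // σ ∈ K}, σ.1 ⊆ τ.1 → projR m σ.1 (f τ) = f σ) →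
      ∃ x : LaurentB m, ∀ σ, projR m σ.1 x = f σ := by
  classical
  intro K
  induction K using Finset.strongInduction with
  | _ K ih =>
    intro hdown f hsupp hcompat
    rcases K.eq_empty_or_nonempty with rfl | hne
    · exact ⟨0, fun σ => absurd σ.2 (Finset.notMem_empty _)⟩
    obtain ⟨σ₀, hσ₀K, hmax⟩ := K.exists_maximal hne
    set K' := K.erase σ₀ with hK'
    have hK'ss : K' ⊂ K := Finset.erase_ssubset hσ₀K
    have hmax' : ∀ σ ∈ K, σ₀ ⊆ σ → σ = σ₀ := by
      intro σ hσ hsub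
      exact le_antisymm (hmax hσ hsub) hsub
    have hdown' : ∀ σ ∈ K', ∀ τ ⊆ σ, τ ∈ K' := by
      intro σ hσ τ hτ
      have hσK := Finset.mem_of_mem_erase hσ
      refine Finset.mem_erase.2 ⟨?_, hdown σ hσK τ hτ⟩
      intro heq
      exact (Finset.mem_erase.1 hσ).1 (hmax' σ hσK (heq ▸ hτ))
    set f' : {σ : Finset (Fin m) // σ ∈ K'} → LaurentB m :=
      fun σ => f ⟨σ.1, Finset.mem_of_mem_erase σ.2⟩ with hf'
    obtain ⟨x', hx'⟩ := ih K' hK'ss hdown' f'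
      (fun σ => hsupp ⟨σ.1, Finset.mem_of_mem_erase σ.2⟩)
      (fun σ τ h => hcompat ⟨σ.1, Finset.mem_of_mem_erase σ.2⟩
        ⟨τ.1, Finset.mem_of_mem_erase τ.2⟩ h)
    set σ₀' : {σ : Finset (Fin m) // σ ∈ K} := ⟨σ₀, hσ₀K⟩ with hσ₀'
    set d : LaurentB m := f σ₀' - projR m σ₀ x' with hd
    have hd_supp : ∀ v ∈ d.coeff.support, ∀ j, v j ≠ 0 → j ∈ σ₀ := by
      intro v hv j hj
      have := Finsupp.support_sub (f := (f σ₀').coeff) (g := (projR m σ₀ x').coeff) hv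
      rcases Finset.mem_union.1 this with h | h
      · exact hsupp σ₀' v h j hj
      · exact part1 σ₀ x' v h j hj
    have hdproj : projR m σ₀ d = d := projR_eq_self _ _ hd_supp
    have hfproj : projR m σ₀ (f σ₀') = f σ₀' :=
      projR_eq_self _ _ (hsupp σ₀')
    have hdzero : ∀ σ ∈ K, σ ≠ σ₀ → projR m σ d = 0 := by
      intro σ hσ hneσ
      have hmemK : σ ∩ σ₀ ∈ K := hdown σ₀ hσ₀K _ Finset.inter_subset_right
      have hmemK' : σ ∩ σ₀ ∈ K' := by
        refine Finset.mem_erase.2 ⟨?_, hmemK⟩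
        intro heq
        have : σ₀ ⊆ σ := by
          rw [← heq]; exact Finset.inter_subset_left
        exact hneσ (hmax' σ hσ this)
      have h1 : projR m σ (f σ₀') = f ⟨σ ∩ σ₀, hmemK⟩ := by
        rw [← hfproj, projR_projR]
        exact hcompat ⟨σ ∩ σ₀, hmemK⟩ σ₀' Finset.inter_subset_right
      have h2 : projR m σ (projR m σ₀ x') = f ⟨σ ∩ σ₀, hmemK⟩ := by
        rw [projR_projR]
        exact hx' ⟨σ ∩ σ₀, hmemK'⟩
      rw [hd, map_sub, h1, h2, sub_self]
    refine ⟨x' + d, ?_⟩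
    rintro ⟨σ, hσ⟩
    by_cases hc : σ = σ₀
    · subst hc
      rw [map_add, hdproj, hd]
      have : projR m σ x' + (f σ₀' - projR m σ x') = f σ₀' := by ring
      rw [this]
    · rw [map_add, hdzero σ hσ hc, add_zero]
      exact hx' ⟨σ, Finset.mem_erase.2 ⟨hc, hσ⟩⟩

-- merged

variable {m : ℕ}

/-- the `j`-th basis exponent vector -/
def E (j : Fin m) : Fin m → ℤ := fun k => if k = j then (1 : ℤ) else 0

/-- the group of monomial units -/
def U : Multiplicative (Fin m → ℤ) →* (LaurentB m)ˣ where
  toFun v :=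
    { val := AddMonoidAlgebra.single v.toAdd 1
      inv := AddMonoidAlgebra.single (-v.toAdd) 1
      val_inv := by
        rw [AddMonoidAlgebra.single_mul_single, add_neg_cancel, one_mul,
          AddMonoidAlgebra.one_def]
      inv_val := by
        rw [AddMonoidAlgebra.single_mul_single, neg_add_cancel, one_mul,
          AddMonoidAlgebra.one_def] }
  map_one' := by
    apply Units.ext
    show AddMonoidAlgebra.single 0 1 = 1
    rw [AddMonoidAlgebra.one_def]
  map_mul' v w := by
    apply Units.ext
    show AddMonoidAlgebra.single (v.toAdd + w.toAdd) 1 = _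
    rw [Units.val_mul]
    show _ = AddMonoidAlgebra.single v.toAdd 1 * AddMonoidAlgebra.single w.toAdd 1
    rw [AddMonoidAlgebra.single_mul_single, one_mul]

lemma U_val (w : Fin m → ℤ) :
    ((U (Multiplicative.ofAdd w) : (LaurentB m)ˣ) : LaurentB m)
      = AddMonoidAlgebra.single w 1 := rfl

lemma U_zpow_val (n : ℤ) (w : Fin m → ℤ) :
    ((U (Multiplicative.ofAdd w) ^ n : (LaurentB m)ˣ) : LaurentB m)
      = AddMonoidAlgebra.single (n • w) 1 := by
  rw [← map_zpow, ← ofAdd_zsmul]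
  exact U_val _

lemma one_sub_unit_dvd {R : Type*} [CommRing R] (u : Rˣ) (n : ℤ) :
    (1 - (u : R)) ∣ (1 - ((u ^ n : Rˣ) : R)) := by
  induction n using Int.rec with
  | ofNat k =>
    rw [Int.ofNat_eq_coe, zpow_natCast, Units.val_pow_eq_pow_val]
    have := sub_dvd_pow_sub_pow (1 : R) (u : R) k
    rwa [one_pow] at this
  | negSucc k =>
    have h1 : (1 - (u : R)) ∣ (1 - ((u ^ (k + 1) : Rˣ) : R)) := by
      rw [Units.val_pow_eq_pow_val]
      have := sub_dvd_pow_sub_pow (1 : R) (u : R) (k + 1)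
      rwa [one_pow] at this
    have key : (1 - ((u ^ Int.negSucc k : Rˣ) : R))
        = ((u ^ Int.negSucc k : Rˣ) : R) * (((u ^ (k + 1) : Rˣ) : R) - 1) := by
      rw [mul_sub, mul_one, ← Units.val_mul, ← zpow_natCast u (k + 1), ← zpow_add]
      have : Int.negSucc k + ((k : ℤ) + 1) = 0 := by rw [Int.negSucc_eq]; ring
      rw [show ((k + 1 : ℕ) : ℤ) = (k : ℤ) + 1 by push_cast; ring, this, zpow_zero,
        Units.val_one]
    rw [key]
    have h2 : (1 - (u : R)) ∣ (((u ^ (k + 1) : Rˣ) : R) - 1) := by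
      have := dvd_neg.2 h1; rwa [neg_sub] at this
    exact h2.mul_left _

lemma single_E_smul (n : ℤ) (j : Fin m) :
    AddMonoidAlgebra.single (n • E j) (1 : ℤ)
      = ((U (Multiplicative.ofAdd (E j)) ^ n : (LaurentB m)ˣ) : LaurentB m) :=
  (U_zpow_val n (E j)).symm

lemma one_sub_B_dvd (n : ℤ) (j : Fin m) :
    (1 - AddMonoidAlgebra.single (E j) (1 : ℤ)) ∣
      (AddMonoidAlgebra.single (n • E j) (1 : ℤ) - 1) := by
  have h := one_sub_unit_dvd (U (Multiplicative.ofAdd (E j))) n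
  rw [U_val] at h
  have h2 := dvd_neg.2 h
  rw [neg_sub] at h2
  rw [single_E_smul]
  exact h2

open AddMonoidAlgebra in
/-- the building blocks of the inclusion-exclusion decomposition -/
def tt (ω : Finset (Fin m)) (v : Fin m → ℤ) : LaurentB m :=
  ∏ j ∈ ω, (AddMonoidAlgebra.single (v j • E j) (1 : ℤ) - 1)

lemma gen_dvd_tt (ω : Finset (Fin m)) (v : Fin m → ℤ) :
    (∏ j ∈ ω, (1 - AddMonoidAlgebra.single (E j) (1 : ℤ))) ∣ tt ω v :=
  Finset.prod_dvd_prod_of_dvd _ _ (fun j _ => one_sub_B_dvd (v j) j)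

lemma single_sum {ι : Type*} (s : Finset ι) (g : ι → (Fin m → ℤ)) :
    AddMonoidAlgebra.single (∑ j ∈ s, g j) (1 : ℤ)
      = ∏ j ∈ s, (AddMonoidAlgebra.single (g j) (1 : ℤ) : LaurentB m) := by
  classical
  induction s using Finset.cons_induction with
  | empty => simp [AddMonoidAlgebra.one_def]
  | cons a s ha ih =>
    rw [Finset.sum_cons, Finset.prod_cons, ← ih, AddMonoidAlgebra.single_mul_single, one_mul]

lemma eq_sum_E (v : Fin m → ℤ) : v = ∑ j, v j • E j := by
  funext k
  simp only [Finset.sum_apply, Pi.smul_apply, E, smul_eq_mul, mul_ite, mul_one, mul_zero]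
  rw [Finset.sum_ite_eq Finset.univ k v]
  simp

/-- inclusion–exclusion decomposition of a monomial -/
lemma single_eq_sum_tt (v : Fin m → ℤ) :
    AddMonoidAlgebra.single v (1 : ℤ)
      = ∑ ω ∈ (Finset.univ : Finset (Fin m)).powerset, tt ω v := by
  classical
  conv_lhs => rw [eq_sum_E v, single_sum]
  have : ∀ j ∈ (Finset.univ : Finset (Fin m)),
      (AddMonoidAlgebra.single (v j • E j) (1 : ℤ) : LaurentB m)
        = (AddMonoidAlgebra.single (v j • E j) (1 : ℤ) - 1) + 1 := by
    intro j _; ring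
  rw [Finset.prod_congr rfl this, Finset.prod_add]
  refine Finset.sum_congr rfl fun ω _ => ?_
  simp [tt]

lemma projExp_smul_E_mem (σ : Finset (Fin m)) (n : ℤ) {j : Fin m} (hj : j ∈ σ) :
    projExp m σ (n • E j) = n • E j := by
  funext k
  rw [projExp_apply]
  by_cases hk : k ∈ σ
  · rw [if_pos hk]
  · rw [if_neg hk]
    have : k ≠ j := fun h => hk (h ▸ hj)
    simp [E, this]

lemma projExp_E_not_mem (σ : Finset (Fin m)) {j : Fin m} (hj : j ∉ σ) (n : ℤ) :
    projExp m σ (n • E j) = 0 := by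
  funext k
  rw [projExp_apply]
  by_cases hk : k ∈ σ
  · rw [if_pos hk]
    have : k ≠ j := fun h => hj (h ▸ hk)
    simp [E, this]
  · rw [if_neg hk]; rfl

lemma projR_tt (σ ω : Finset (Fin m)) (v : Fin m → ℤ) :
    projR m σ (tt ω v) = if ω ⊆ σ then tt ω v else 0 := by
  rw [tt, map_prod]
  by_cases h : ω ⊆ σ
  · rw [if_pos h]
    refine Finset.prod_congr rfl fun j hj => ?_
    rw [map_sub, map_one, projR_single, projExp_smul_E_mem σ (v j) (h hj)]
  · rw [if_neg h]
    obtain ⟨j, hjω, hjσ⟩ := Finset.not_subset.1 h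
    refine Finset.prod_eq_zero hjω ?_
    rw [map_sub, map_one, projR_single, projExp_E_not_mem σ hjσ (v j)]
    rw [← AddMonoidAlgebra.one_def, sub_self]

def cc (x : LaurentB m) (ω : Finset (Fin m)) : LaurentB m :=
  ∑ v ∈ x.coeff.support, x.coeff v • tt ω v

lemma x_eq_sum_cc (x : LaurentB m) :
    x = ∑ ω ∈ (Finset.univ : Finset (Fin m)).powerset, cc x ω := by
  classical
  have h1 : x = ∑ v ∈ x.coeff.support, AddMonoidAlgebra.single v (x.coeff v) := by
    conv_lhs => rw [← AddMonoidAlgebra.sum_coeff_single x]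
    rfl
  have h2 : ∀ v, AddMonoidAlgebra.single v (x.coeff v) = x.coeff v • AddMonoidAlgebra.single v (1:ℤ) := by
    intro v
    rw [AddMonoidAlgebra.smul_single, smul_eq_mul, mul_one]
  calc x = ∑ v ∈ x.coeff.support, AddMonoidAlgebra.single v (x.coeff v) := h1
  _ = ∑ v ∈ x.coeff.support, ∑ ω ∈ (Finset.univ : Finset (Fin m)).powerset, x.coeff v • tt ω v := by
      refine Finset.sum_congr rfl fun v _ => ?_
      rw [h2 v, single_eq_sum_tt, Finset.smul_sum]
  _ = ∑ ω ∈ (Finset.univ : Finset (Fin m)).powerset, cc x ω := Finset.sum_comm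

lemma projR_cc (σ ω : Finset (Fin m)) (x : LaurentB m) :
    projR m σ (cc x ω) = if ω ⊆ σ then cc x ω else 0 := by
  rw [cc, map_sum]
  by_cases h : ω ⊆ σ
  · rw [if_pos h]
    refine Finset.sum_congr rfl fun v _ => ?_
    rw [map_zsmul, projR_tt, if_pos h]
  · rw [if_neg h]
    refine Finset.sum_eq_zero fun v _ => ?_
    rw [map_zsmul, projR_tt, if_neg h, smul_zero]

lemma projR_eq_sum_cc (σ : Finset (Fin m)) (x : LaurentB m) :
    projR m σ x = ∑ ω ∈ σ.powerset, cc x ω := by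
  classical
  conv_lhs => rw [x_eq_sum_cc x]
  rw [map_sum, Finset.sum_congr rfl (fun ω _ => projR_cc σ ω x), ← Finset.sum_filter]
  congr 1
  ext ρ
  simp [Finset.mem_powerset, Finset.mem_filter]

lemma kernel_iff (K : Finset (Finset (Fin m)))
    (hdown : ∀ σ ∈ K, ∀ τ ⊆ σ, τ ∈ K) (x : LaurentB m) :
    (∀ σ ∈ K, projR m σ x = 0) ↔
      x ∈ Ideal.span {y : LaurentB m | ∃ ω : Finset (Fin m), ω ∉ K ∧
        y = ∏ j ∈ ω, (1 - AddMonoidAlgebra.single (E j) (1 : ℤ))} := by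
  classical
  constructor
  · intro h
    have hc : ∀ ω, ω ∈ K → cc x ω = 0 := by
      intro ω
      induction ω using Finset.strongInduction with
      | _ ω ih =>
        intro hω
        have h1 : ∑ ρ ∈ ω.powerset, cc x ρ = 0 := by
          rw [← projR_eq_sum_cc]; exact h ω hω
        rw [← Finset.add_sum_erase _ _ (Finset.mem_powerset_self ω)] at h1
        have h2 : ∑ ρ ∈ ω.powerset.erase ω, cc x ρ = 0 := by
          refine Finset.sum_eq_zero fun ρ hρ => ?_
          have hρ' := Finset.mem_erase.1 hρ
          have hsub : ρ ⊆ ω := Finset.mem_powerset.1 hρ'.2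
          exact ih ρ (lt_of_le_of_ne hsub hρ'.1) (hdown ω hω ρ hsub)
        rw [h2, add_zero] at h1
        exact h1
    rw [x_eq_sum_cc x]
    refine Submodule.sum_mem _ fun ω _ => ?_
    by_cases hK : ω ∈ K
    · rw [hc ω hK]; exact Submodule.zero_mem _
    · rw [cc]
      refine Submodule.sum_mem _ fun v _ => ?_
      refine zsmul_mem ?_ _
      obtain ⟨q, hq⟩ := gen_dvd_tt ω v
      rw [hq]
      exact Ideal.mul_mem_right _ _ (Ideal.subset_span ⟨ω, hK, rfl⟩)
  · intro hx σ hσ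
    refine Submodule.span_induction (p := fun y _ => projR m σ y = 0)
      ?_ ?_ ?_ ?_ hx
    · rintro y ⟨ω, hωK, rfl⟩
      have hns : ¬ ω ⊆ σ := fun hsub => hωK (hdown σ hσ ω hsub)
      obtain ⟨j, hjω, hjσ⟩ := Finset.not_subset.1 hns
      rw [map_prod]
      refine Finset.prod_eq_zero hjω ?_
      have hE : projExp m σ (E j) = 0 := by
        have := projExp_E_not_mem σ hjσ 1
        rwa [one_smul] at this
      rw [map_sub, map_one, projR_single, hE, ← AddMonoidAlgebra.one_def, sub_self]
    · exact map_zero _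
    · intro a b _ _ ha hb
      rw [map_add, ha, hb, add_zero]
    · intro r a _ ha
      rw [smul_eq_mul, map_mul, ha, mul_zero]

end LFAhelp

/-- **Canonical presentation of the Laurent face algebra.**
Let `K` be a finite abstract simplicial complex on the vertex set `{1,…,m}` (a
collection of subsets of `Fin m` containing `∅` and closed under subsets).  The
Laurent face algebra `F_K[β;K]` is the subring of `∏_{σ∈K} S^±(β(σ))` of families
compatible under the maps `β_j ↦ 1` (`j ∈ τ∖σ`); concretely, its elements are the
families `f : {σ // σ ∈ K} → S^±_ℤ(β)` with each `f σ` supported on exponents living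
on `σ` and `projR σ (f τ) = f σ` whenever `σ ⊆ τ`.  Then the canonical homomorphism
`Φ : S^±_ℤ(β₁,…,β_m) → F_K[β;K]`, whose component at `σ` is `projR σ`, is:
* actually a map into `F_K[β;K]` (first two conjuncts);
* surjective onto `F_K[β;K]` (third conjunct); and
* of kernel the ideal generated by the products `(1−β)_ω = ∏_{j∈ω}(1−β_j)` over the
  non-faces `ω ∉ K` (fourth conjunct);
hence it induces a canonical isomorphism
`S^±_ℤ(β)/((1−β)_ω : ω ∉ K) ≅ F_K[β;K]` of `S^±_ℤ(β)`-algebras. -/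
theorem laurent_face_algebra_presentation (m : ℕ) (K : Finset (Finset (Fin m)))
    (hempty : ∅ ∈ K) (hdown : ∀ σ ∈ K, ∀ τ ⊆ σ, τ ∈ K) :
    (∀ (x : LaurentB m) (σ : Finset (Fin m)),
      ∀ v ∈ (projR m σ x).coeff.support, ∀ j, v j ≠ 0 → j ∈ σ) ∧
    (∀ (x : LaurentB m) (σ τ : Finset (Fin m)), σ ⊆ τ →
      projR m σ (projR m τ x) = projR m σ x) ∧
    (∀ f : {σ : Finset (Fin m) // σ ∈ K} → LaurentB m,
      (∀ σ, ∀ v ∈ (f σ).coeff.support, ∀ j, v j ≠ 0 → j ∈ σ.1) →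
      (∀ σ τ : {σ : Finset (Fin m) // σ ∈ K}, σ.1 ⊆ τ.1 → projR m σ.1 (f τ) = f σ) →
      ∃ x : LaurentB m, ∀ σ, projR m σ.1 x = f σ) ∧
    (∀ x : LaurentB m,
      (∀ σ ∈ K, projR m σ x = 0) ↔
      x ∈ Ideal.span {y : LaurentB m | ∃ ω : Finset (Fin m), ω ∉ K ∧
        y = ∏ j ∈ ω,
          (1 - AddMonoidAlgebra.single (fun k => if k = j then (1 : ℤ) else 0) 1)}) := by
  classical
  refine ⟨fun x σ => LFAhelp.part1 σ x, ?_, LFAhelp.surj K hdown, ?_⟩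
  · intro x σ τ hστ
    rw [LFAhelp.projR_projR, Finset.inter_eq_left.2 hστ]
  · exact fun x => LFAhelp.kernel_iff K hdown x
end
end
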